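/- arXiv:1309.4158 — 2 statements merged into one kernel-verified Lean document; each statement's English description precedes it below -/
import Mathlib

section
/- For multinomial weights (w_1^{(n)},...,w_n^{(n)}) ~ Multinomial(n; 1/n,...,1/n), the quantity n · Σ_{i=1}^n (w_i^{(n)}/n − 1/n)^2 − (1 − 1/n) converges to 0 in probability as n → ∞; in particular n Σ_{i=1}^n (w_i^{(n)}/n − 1/n)^2 → 1 in probability. -/
open MeasureTheory Finset Filter

/-- The law of `n` i.i.d. uniform draws from `{0,...,n-1}`: the uniform probability
measure on the finite space `Fin n → Fin n`. The multinomial weight vector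
`(w_1,...,w_n) ~ Multinomial(n; 1/n,...,1/n)` is obtained from it via `mw`. -/
noncomputable def multinomialMeasure (n : ℕ) : Measure (Fin n → Fin n) :=
  ((Fintype.card (Fin n → Fin n) : ENNReal))⁻¹ • Measure.count

/-- `mw n i f` is the multinomial weight `w_{i+1}^{(n)}`: the number of draws
(among the `n` draws recorded by `f`) that fall on cell `i`. -/
def mw (n : ℕ) (i : ℕ) (f : Fin n → Fin n) : ℕ :=
  (Finset.univ.filter (fun j => (f j : ℕ) = i)).card

namespace Stmt8

variable {n : ℕ}

/-- indicator of equality -/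
def chi (n : ℕ) (a b : Fin n) : ℝ := if a = b then 1 else 0

lemma chi_comm (a b : Fin n) : chi n a b = chi n b a := by
  unfold chi; by_cases h : a = b <;> simp [h, eq_comm]

lemma chi_mul_self (a b : Fin n) : chi n a b * chi n a b = chi n a b := by
  unfold chi; split_ifs <;> ring

lemma chi_nonneg (a b : Fin n) : 0 ≤ chi n a b := by
  unfold chi; split_ifs <;> norm_num

lemma sum_chi_right (a : Fin n) : ∑ v : Fin n, chi n a v = 1 := by
  unfold chi
  simp

lemma sum_split {ι : Type*} [Fintype ι] [DecidableEq ι] (t : ι) (F : (ι → Fin n) → ℝ) :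
    ∑ f : ι → Fin n, F f
      = ∑ g : {j : ι // j ≠ t} → Fin n, ∑ v : Fin n,
          F ((Equiv.funSplitAt t (Fin n)).symm (v, g)) := by
  rw [← Equiv.sum_comp (Equiv.funSplitAt t (Fin n)).symm F, Fintype.sum_prod_type]
  exact Finset.sum_comm

lemma splitAt_symm_ne {ι : Type*} [DecidableEq ι] {t j : ι} (h : j ≠ t) (v : Fin n)
    (g : {j : ι // j ≠ t} → Fin n) :
    (Equiv.funSplitAt t (Fin n)).symm (v, g) j = g ⟨j, h⟩ := dif_neg h

lemma splitAt_symm_self {ι : Type*} [DecidableEq ι] (t : ι) (v : Fin n)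
    (g : {j : ι // j ≠ t} → Fin n) :
    (Equiv.funSplitAt t (Fin n)).symm (v, g) t = v := by
  simp [Equiv.funSplitAt, Equiv.piSplitAt]

lemma sum_chi {ι : Type*} [Fintype ι] [DecidableEq ι] (a b : ι) (hab : a ≠ b) :
    ∑ f : ι → Fin n, chi n (f a) (f b) = (n : ℝ) ^ (Fintype.card ι - 1) := by
  rw [sum_split b]
  have : ∀ g : {j : ι // j ≠ b} → Fin n,
      (∑ v : Fin n, chi n ((Equiv.funSplitAt b (Fin n)).symm (v, g) a)
        ((Equiv.funSplitAt b (Fin n)).symm (v, g) b)) = 1 := by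
    intro g
    have h1 : ∀ v : Fin n, (Equiv.funSplitAt b (Fin n)).symm (v, g) a = g ⟨a, hab⟩ :=
      fun v => splitAt_symm_ne hab v g
    simp only [h1, splitAt_symm_self]
    exact sum_chi_right _
  rw [Finset.sum_congr rfl (fun g _ => this g), Finset.sum_const, nsmul_eq_mul, mul_one]
  rw [Finset.card_univ, Fintype.card_fun, Fintype.card_fin,
    Fintype.card_subtype_compl, Fintype.card_subtype_eq, Nat.cast_pow]


lemma sum_chi_chi' {ι : Type*} [Fintype ι] [DecidableEq ι] (a b c d : ι)
    (hab : a ≠ b) (hcd : c ≠ d) (hda : a ≠ d) (hdb : b ≠ d) :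
    ∑ f : ι → Fin n, chi n (f a) (f b) * chi n (f c) (f d)
      = (n : ℝ) ^ (Fintype.card ι - 2) := by
  rw [sum_split d]
  have key : ∀ g : {j : ι // j ≠ d} → Fin n,
      (∑ v : Fin n,
        chi n ((Equiv.funSplitAt d (Fin n)).symm (v, g) a)
          ((Equiv.funSplitAt d (Fin n)).symm (v, g) b) *
        (chi n ((Equiv.funSplitAt d (Fin n)).symm (v, g) c)
          ((Equiv.funSplitAt d (Fin n)).symm (v, g) d)))
      = chi n (g ⟨a, hda⟩) (g ⟨b, hdb⟩) := by
    intro g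
    have h1 : ∀ v : Fin n, (Equiv.funSplitAt d (Fin n)).symm (v, g) a = g ⟨a, hda⟩ :=
      fun v => splitAt_symm_ne hda v g
    have h2 : ∀ v : Fin n, (Equiv.funSplitAt d (Fin n)).symm (v, g) b = g ⟨b, hdb⟩ :=
      fun v => splitAt_symm_ne hdb v g
    have h3 : ∀ v : Fin n, (Equiv.funSplitAt d (Fin n)).symm (v, g) c = g ⟨c, hcd⟩ :=
      fun v => splitAt_symm_ne hcd v g
    simp only [h1, h2, h3, splitAt_symm_self, ← Finset.mul_sum, sum_chi_right, mul_one]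
  rw [Finset.sum_congr rfl (fun g _ => key g)]
  have hab' : (⟨a, hda⟩ : {j : ι // j ≠ d}) ≠ ⟨b, hdb⟩ := by
    simp [Subtype.ext_iff, hab]
  rw [sum_chi _ _ hab', Fintype.card_subtype_compl, Fintype.card_subtype_eq]
  congr 1

lemma pair_cases {ι : Type*} [DecidableEq ι] {a b c d : ι} (hcd : c ≠ d)
    (h : ({a, b} : Finset ι) = {c, d}) : (a = c ∧ b = d) ∨ (a = d ∧ b = c) := by
  have ha : a ∈ ({c, d} : Finset ι) := h ▸ (by simp)
  have hb : b ∈ ({c, d} : Finset ι) := h ▸ (by simp)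
  have hc : c ∈ ({a, b} : Finset ι) := h ▸ (by simp)
  have hd : d ∈ ({a, b} : Finset ι) := h ▸ (by simp)
  simp only [Finset.mem_insert, Finset.mem_singleton] at ha hb hc hd
  rcases ha with rfl | rfl
  · rcases hd with rfl | rfl
    · exact absurd rfl hcd
    · exact Or.inl ⟨rfl, rfl⟩
  · rcases hc with rfl | rfl
    · exact absurd rfl hcd
    · exact Or.inr ⟨rfl, rfl⟩

lemma sum_chi_chi {ι : Type*} [Fintype ι] [DecidableEq ι] (a b c d : ι)
    (hab : a ≠ b) (hcd : c ≠ d) (hne : ({a, b} : Finset ι) ≠ {c, d}) :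
    ∑ f : ι → Fin n, chi n (f a) (f b) * chi n (f c) (f d)
      = (n : ℝ) ^ (Fintype.card ι - 2) := by
  -- there is an element of {c,d} not in {a,b}
  have hsub : ¬ ({c, d} : Finset ι) ⊆ {a, b} := by
    intro hs
    exact hne (Finset.eq_of_subset_of_card_le hs (by
      rw [Finset.card_pair hab, Finset.card_pair hcd])).symm
  rcases Finset.not_subset.mp hsub with ⟨t, ht, htn⟩
  simp only [Finset.mem_insert, Finset.mem_singleton] at ht htn
  push_neg at htn
  obtain ⟨hta, htb⟩ := htn
  rcases ht with h | h
  · subst h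
    have : ∀ f : ι → Fin n, chi n (f t) (f d) = chi n (f d) (f t) :=
      fun f => chi_comm _ _
    simp only [this]
    exact sum_chi_chi' a b d t hab hcd.symm (fun h => hta h.symm) (fun h => htb h.symm)
  · subst h
    exact sum_chi_chi' a b c t hab hcd (fun h => hta h.symm) (fun h => htb h.symm)


lemma cross (hn : 2 ≤ n) {p q : Fin n × Fin n}
    (hp : p ∈ (univ : Finset (Fin n)).offDiag) (hq : q ∈ (univ : Finset (Fin n)).offDiag) :
    ∑ f : Fin n → Fin n,
      ((chi n (f p.1) (f p.2) - 1/n) * (chi n (f q.1) (f q.2) - 1/n))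
    = if ({p.1, p.2} : Finset (Fin n)) = {q.1, q.2}
        then (n:ℝ)^(n-1) - (n:ℝ)^(n-2) else 0 := by
  have hp' : p.1 ≠ p.2 := (Finset.mem_offDiag.mp hp).2.2
  have hq' : q.1 ≠ q.2 := (Finset.mem_offDiag.mp hq).2.2
  have hn0 : (n:ℝ) ≠ 0 := Nat.cast_ne_zero.mpr (by omega)
  have hpow1 : (n:ℝ)^(n-1) = (n:ℝ)^(n-2) * n := by
    rw [← pow_succ]; congr 1; omega
  have hpown : (n:ℝ)^n = (n:ℝ)^(n-2) * n * n := by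
    rw [mul_assoc, ← sq, ← pow_add]; congr 1; omega
  have E : ∀ f : Fin n → Fin n,
      (chi n (f p.1) (f p.2) - 1/(n:ℝ)) * (chi n (f q.1) (f q.2) - 1/(n:ℝ))
      = chi n (f p.1) (f p.2) * chi n (f q.1) (f q.2)
        - (1/(n:ℝ)) * chi n (f p.1) (f p.2) - (1/(n:ℝ)) * chi n (f q.1) (f q.2)
        + (1/(n:ℝ))^2 := fun f => by ring
  simp only [E, Finset.sum_add_distrib, Finset.sum_sub_distrib, ← Finset.mul_sum,
    Finset.sum_const, Finset.card_univ, nsmul_eq_mul]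
  rw [sum_chi _ _ hp', sum_chi _ _ hq', Fintype.card_fin, Fintype.card_fun, Fintype.card_fin]
  by_cases hs : ({p.1, p.2} : Finset (Fin n)) = {q.1, q.2}
  · rw [if_pos hs]
    have hchiq : ∀ f : Fin n → Fin n,
        chi n (f p.1) (f p.2) * chi n (f q.1) (f q.2) = chi n (f p.1) (f p.2) := by
      intro f
      rcases pair_cases hq' hs with ⟨h1, h2⟩ | ⟨h1, h2⟩
      · rw [← h1, ← h2, chi_mul_self]
      · rw [← h1, ← h2, chi_comm (f p.2) (f p.1), chi_mul_self]
    rw [Finset.sum_congr rfl (fun f _ => hchiq f), sum_chi _ _ hp', Fintype.card_fin]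
    push_cast
    rw [hpow1, hpown]
    field_simp
    ring
  · rw [if_neg hs, sum_chi_chi _ _ _ _ hp' hq' hs, Fintype.card_fin]
    push_cast
    rw [hpow1, hpown]
    field_simp
    ring


/-- `Dd n f = Σ_{j≠k} 1[f j = f k]`. -/
noncomputable def Dd (n : ℕ) (f : Fin n → Fin n) : ℝ :=
  ∑ p ∈ (univ : Finset (Fin n)).offDiag, chi n (f p.1) (f p.2)

lemma var_bound (hn : 2 ≤ n) :
    ∑ f : Fin n → Fin n, (Dd n f - ((n:ℝ) - 1))^2 ≤ 2 * (n:ℝ)^(n+1) := by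
  have hn0 : (n:ℝ) ≠ 0 := Nat.cast_ne_zero.mpr (by omega)
  have hcast : ((n:ℝ) - 1) = ∑ _p ∈ (univ : Finset (Fin n)).offDiag, (1/(n:ℝ)) := by
    rw [Finset.sum_const, Finset.offDiag_card, Finset.card_univ, Fintype.card_fin,
      nsmul_eq_mul, Nat.cast_sub (Nat.le_mul_of_pos_left n (by omega))]
    push_cast
    field_simp
  have hsq : ∀ f : Fin n → Fin n, (Dd n f - ((n:ℝ) - 1))^2
      = ∑ p ∈ (univ : Finset (Fin n)).offDiag, ∑ q ∈ (univ : Finset (Fin n)).offDiag,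
          ((chi n (f p.1) (f p.2) - 1/n) * (chi n (f q.1) (f q.2) - 1/n)) := by
    intro f
    rw [Dd, hcast, ← Finset.sum_sub_distrib, sq, Finset.sum_mul_sum]
  calc ∑ f : Fin n → Fin n, (Dd n f - ((n:ℝ) - 1))^2
      = ∑ p ∈ (univ : Finset (Fin n)).offDiag, ∑ q ∈ (univ : Finset (Fin n)).offDiag,
          ∑ f : Fin n → Fin n,
          ((chi n (f p.1) (f p.2) - 1/n) * (chi n (f q.1) (f q.2) - 1/n)) := by
        rw [Finset.sum_congr rfl (fun f _ => hsq f), Finset.sum_comm]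
        exact Finset.sum_congr rfl (fun p _ => Finset.sum_comm)
    _ = ∑ p ∈ (univ : Finset (Fin n)).offDiag, ∑ q ∈ (univ : Finset (Fin n)).offDiag,
          (if ({p.1, p.2} : Finset (Fin n)) = {q.1, q.2}
            then (n:ℝ)^(n-1) - (n:ℝ)^(n-2) else 0) := by
        refine Finset.sum_congr rfl (fun p hp => Finset.sum_congr rfl (fun q hq => ?_))
        exact cross hn hp hq
    _ ≤ ∑ _p ∈ (univ : Finset (Fin n)).offDiag, 2 * (n:ℝ)^(n-1) := by
        refine Finset.sum_le_sum (fun p hp => ?_)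
        rw [← Finset.sum_filter, Finset.sum_const, nsmul_eq_mul]
        have hA0 : (0:ℝ) ≤ (n:ℝ)^(n-1) - (n:ℝ)^(n-2) := by
          have : (n:ℝ)^(n-2) ≤ (n:ℝ)^(n-1) :=
            pow_le_pow_right₀ (by exact_mod_cast Nat.one_le_of_lt hn) (by omega)
          linarith
        have hcard : ((Finset.filter (fun q => ({p.1, p.2} : Finset (Fin n)) = {q.1, q.2})
            (univ : Finset (Fin n)).offDiag).card : ℝ) ≤ 2 := by
          have hsub : Finset.filter (fun q => ({p.1, p.2} : Finset (Fin n)) = {q.1, q.2})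
              (univ : Finset (Fin n)).offDiag ⊆ {(p.1, p.2), (p.2, p.1)} := by
            intro q hqf
            rw [Finset.mem_filter] at hqf
            obtain ⟨hq, hs⟩ := hqf
            have hq' : q.1 ≠ q.2 := (Finset.mem_offDiag.mp hq).2.2
            rcases pair_cases hq' hs with ⟨h1, h2⟩ | ⟨h1, h2⟩
            · simp [Finset.mem_insert, Prod.ext_iff, h1.symm, h2.symm]
            · have : q = (p.2, p.1) := Prod.ext h2.symm h1.symm
              simp [this]
          have hb : ({(p.1, p.2), (p.2, p.1)} : Finset (Fin n × Fin n)).card ≤ 2 := by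
            refine (Finset.card_insert_le _ _).trans ?_
            simp
          exact_mod_cast (Finset.card_le_card hsub).trans hb
        have hA1 : (n:ℝ)^(n-1) - (n:ℝ)^(n-2) ≤ (n:ℝ)^(n-1) := by
          have : (0:ℝ) ≤ (n:ℝ)^(n-2) := by positivity
          linarith
        exact mul_le_mul hcard hA1 hA0 (by norm_num)
    _ ≤ 2 * (n:ℝ)^(n+1) := by
        rw [Finset.sum_const, nsmul_eq_mul, Finset.offDiag_card, Finset.card_univ,
          Fintype.card_fin]
        have h1 : ((n*n - n : ℕ) : ℝ) ≤ (n:ℝ)^2 := by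
          have : (n*n - n : ℕ) ≤ n*n := Nat.sub_le _ _
          calc ((n*n - n : ℕ) : ℝ) ≤ ((n*n : ℕ) : ℝ) := by exact_mod_cast this
            _ = (n:ℝ)^2 := by push_cast; ring
        have h2 : (0:ℝ) ≤ 2 * (n:ℝ)^(n-1) := by positivity
        calc ((n*n - n : ℕ) : ℝ) * (2 * (n:ℝ)^(n-1)) ≤ (n:ℝ)^2 * (2 * (n:ℝ)^(n-1)) :=
              mul_le_mul_of_nonneg_right h1 (by positivity)
          _ = 2 * ((n:ℝ)^2 * (n:ℝ)^(n-1)) := by ring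
          _ = 2 * (n:ℝ)^(n+1) := by rw [← pow_add]; congr 2; omega


lemma mw_cast (i : ℕ) (f : Fin n → Fin n) :
    (mw n i f : ℝ) = ∑ j : Fin n, if (f j : ℕ) = i then (1:ℝ) else 0 := by
  rw [mw, Finset.card_filter]
  push_cast
  exact Finset.sum_congr rfl (fun j _ => by split_ifs <;> norm_num)

lemma inner_sum (f : Fin n → Fin n) (j k : Fin n) :
    ∑ i ∈ Finset.range n,
      ((if (f j : ℕ) = i then (1:ℝ) else 0) * (if (f k : ℕ) = i then (1:ℝ) else 0))
    = chi n (f j) (f k) := by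
  have h : ∀ i, (if (f j : ℕ) = i then (1:ℝ) else 0) * (if (f k : ℕ) = i then (1:ℝ) else 0)
      = if (f j : ℕ) = i then (if (f k : ℕ) = (f j : ℕ) then (1:ℝ) else 0) else 0 := by
    intro i
    by_cases h1 : (f j : ℕ) = i
    · rw [if_pos h1, one_mul, ← h1, if_pos rfl]
    · rw [if_neg h1, zero_mul, if_neg h1]
  simp only [h]
  rw [Finset.sum_ite_eq (Finset.range n) ((f j : ℕ)) (fun _ => if (f k : ℕ) = (f j : ℕ) then (1:ℝ) else 0),
    if_pos (Finset.mem_range.mpr (f j).isLt)]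
  simp [chi, Fin.ext_iff, eq_comm]

lemma sum_mw (hn : 1 ≤ n) (f : Fin n → Fin n) :
    ∑ i ∈ Finset.range n, (mw n i f : ℝ) = n := by
  simp only [mw_cast]
  rw [Finset.sum_comm]
  have h : ∀ j : Fin n, (∑ i ∈ Finset.range n, if (f j : ℕ) = i then (1:ℝ) else 0) = 1 := by
    intro j
    rw [Finset.sum_ite_eq (Finset.range n) ((f j : ℕ)) (fun _ => (1:ℝ)),
      if_pos (Finset.mem_range.mpr (f j).isLt)]
  rw [Finset.sum_congr rfl (fun j _ => h j)]
  simp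

lemma sum_mw_sq (hn : 1 ≤ n) (f : Fin n → Fin n) :
    ∑ i ∈ Finset.range n, (mw n i f : ℝ)^2 = n + Dd n f := by
  have h : ∀ i, (mw n i f : ℝ)^2
      = ∑ j : Fin n, ∑ k : Fin n,
          ((if (f j : ℕ) = i then (1:ℝ) else 0) * (if (f k : ℕ) = i then (1:ℝ) else 0)) := by
    intro i
    rw [mw_cast, sq, Finset.sum_mul_sum]
  simp only [h]
  rw [Finset.sum_comm]
  have h2 : ∀ j : Fin n, (∑ i ∈ Finset.range n, ∑ k : Fin n,
      ((if (f j : ℕ) = i then (1:ℝ) else 0) * (if (f k : ℕ) = i then (1:ℝ) else 0)))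
      = ∑ k : Fin n, chi n (f j) (f k) := by
    intro j
    rw [Finset.sum_comm]
    exact Finset.sum_congr rfl (fun k _ => inner_sum f j k)
  rw [Finset.sum_congr rfl (fun j _ => h2 j)]
  rw [← Finset.sum_product']
  rw [← Finset.diag_union_offDiag (univ : Finset (Fin n)),
    Finset.sum_union (Finset.disjoint_diag_offDiag _)]
  rw [Dd]
  congr 1
  have hdiag : ∀ p ∈ (univ : Finset (Fin n)).diag, chi n (f p.1) (f p.2) = 1 := by
    intro p hp
    have := (Finset.mem_diag.mp hp).2
    simp [chi, this]
  rw [Finset.sum_congr rfl hdiag, Finset.sum_const, Finset.diag_card, Finset.card_univ,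
    Fintype.card_fin, nsmul_eq_mul, mul_one]

lemma sum_sq_eq (hn : 1 ≤ n) (f : Fin n → Fin n) :
    ∑ i ∈ Finset.range n, ((mw n i f : ℝ) - 1)^2 = Dd n f := by
  have h : ∀ i : ℕ, ((mw n i f : ℝ) - 1)^2 = (mw n i f : ℝ)^2 - 2 * (mw n i f : ℝ) + 1 :=
    fun i => by ring
  simp only [h]
  rw [Finset.sum_add_distrib, Finset.sum_sub_distrib, sum_mw_sq hn f, ← Finset.mul_sum,
    sum_mw hn f]
  simp
  ring

lemma X_eq (hn : 2 ≤ n) (f : Fin n → Fin n) :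
    (n : ℝ) * (∑ i ∈ Finset.range n, ((mw n i f : ℝ) / n - 1 / n) ^ 2) - (1 - 1 / (n:ℝ))
    = (Dd n f - ((n:ℝ) - 1)) / n := by
  have hn0 : (n:ℝ) ≠ 0 := Nat.cast_ne_zero.mpr (by omega)
  have h : ∀ i : ℕ, ((mw n i f : ℝ) / n - 1 / n) ^ 2 = ((mw n i f : ℝ) - 1)^2 / (n:ℝ)^2 := by
    intro i
    field_simp
  simp only [h]
  rw [← Finset.sum_div, sum_sq_eq (by omega) f]
  field_simp

lemma cheb {α : Type*} [Fintype α] (X : α → ℝ) (ε : ℝ) (hε : 0 < ε)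
    [DecidablePred fun a => ε ≤ |X a|] :
    ((Finset.univ.filter (fun a => ε ≤ |X a|)).card : ℝ) * ε^2 ≤ ∑ a : α, (X a)^2 := by
  calc ((Finset.univ.filter (fun a => ε ≤ |X a|)).card : ℝ) * ε^2
      = ∑ _a ∈ Finset.univ.filter (fun a => ε ≤ |X a|), ε^2 := by
        rw [Finset.sum_const, nsmul_eq_mul]
    _ ≤ ∑ a ∈ Finset.univ.filter (fun a => ε ≤ |X a|), (X a)^2 := by
        refine Finset.sum_le_sum (fun a ha => ?_)
        have := (Finset.mem_filter.mp ha).2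
        calc ε^2 ≤ |X a|^2 := pow_le_pow_left₀ hε.le this 2
          _ = (X a)^2 := sq_abs _
    _ ≤ ∑ a : α, (X a)^2 :=
        Finset.sum_le_sum_of_subset_of_nonneg (Finset.filter_subset _ _)
          (fun a _ _ => sq_nonneg _)


lemma count_set_eq {α : Type*} [Fintype α] [MeasurableSpace α] [MeasurableSingletonClass α]
    (p : α → Prop) [DecidablePred p] :
    Measure.count {a : α | p a} = ((Finset.univ.filter p).card : ENNReal) := by
  rw [← Measure.count_apply_finset]
  congr 1
  ext a
  simp

lemma meas_bound (hn : 2 ≤ n) {ε : ℝ} (hε : 0 < ε) :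
    multinomialMeasure n {f | ε ≤ |(Dd n f - ((n:ℝ) - 1)) / n|}
      ≤ ENNReal.ofReal (2 / (n * ε^2)) := by
  classical
  have hn0 : (n:ℝ) ≠ 0 := Nat.cast_ne_zero.mpr (by omega)
  set X : (Fin n → Fin n) → ℝ := fun f => (Dd n f - ((n:ℝ) - 1)) / n with hX
  have hsum : ∑ f : Fin n → Fin n, (X f)^2 ≤ 2 * (n:ℝ)^(n-1) := by
    have h1 : ∀ f, (X f)^2 = (Dd n f - ((n:ℝ)-1))^2 / (n:ℝ)^2 := fun f => by
      rw [hX]; rw [div_pow]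
    simp only [h1]
    rw [← Finset.sum_div, div_le_iff₀ (by positivity)]
    calc ∑ f : Fin n → Fin n, (Dd n f - ((n:ℝ) - 1))^2 ≤ 2 * (n:ℝ)^(n+1) := var_bound hn
      _ = 2 * (n:ℝ)^(n-1) * (n:ℝ)^2 := by rw [mul_assoc, ← pow_add]; congr 2; omega
  have hcard : ((Finset.univ.filter (fun f => ε ≤ |X f|)).card : ℝ)
      ≤ 2/((n:ℝ)*ε^2) * ((Fintype.card (Fin n → Fin n) : ℕ) : ℝ) := by
    have h2 : ((Finset.univ.filter (fun f => ε ≤ |X f|)).card : ℝ) * ε^2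
        ≤ 2 * (n:ℝ)^(n-1) := le_trans (cheb X ε hε) hsum
    have h3 : (2:ℝ)/((n:ℝ)*ε^2) * ((Fintype.card (Fin n → Fin n) : ℕ) : ℝ)
        = 2 * (n:ℝ)^(n-1) / ε^2 := by
      rw [Fintype.card_fun, Fintype.card_fin]
      push_cast
      have hp : (n:ℝ)^n = (n:ℝ)^(n-1) * n := by rw [← pow_succ]; congr 1; omega
      rw [hp]
      field_simp
    rw [h3, le_div_iff₀ (by positivity)]
    exact h2
  have hKne : ((Fintype.card (Fin n → Fin n) : ℕ) : ENNReal) ≠ 0 := by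
    simp [Fintype.card_ne_zero]
  have hKtop : ((Fintype.card (Fin n → Fin n) : ℕ) : ENNReal) ≠ ⊤ := ENNReal.natCast_ne_top _
  have hset : {f : Fin n → Fin n | ε ≤ |(Dd n f - ((n:ℝ) - 1)) / n|}
      = {f : Fin n → Fin n | ε ≤ |X f|} := rfl
  rw [hset, multinomialMeasure, Measure.smul_apply, smul_eq_mul,
    count_set_eq (fun f => ε ≤ |X f|)]
  have hc : ((Finset.univ.filter (fun f => ε ≤ |X f|)).card : ENNReal)
      ≤ ENNReal.ofReal (2/((n:ℝ)*ε^2)) * ((Fintype.card (Fin n → Fin n) : ℕ) : ENNReal) := by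
    rw [← ENNReal.ofReal_natCast ((Fintype.card (Fin n → Fin n) : ℕ)),
      ← ENNReal.ofReal_mul (by positivity),
      ← ENNReal.ofReal_natCast ((Finset.univ.filter (fun f => ε ≤ |X f|)).card)]
    exact ENNReal.ofReal_le_ofReal hcard
  calc (((Fintype.card (Fin n → Fin n) : ℕ)) : ENNReal)⁻¹
        * ((Finset.univ.filter (fun f => ε ≤ |X f|)).card : ENNReal)
      ≤ (((Fintype.card (Fin n → Fin n) : ℕ)) : ENNReal)⁻¹
        * (ENNReal.ofReal (2/((n:ℝ)*ε^2)) * ((Fintype.card (Fin n → Fin n) : ℕ) : ENNReal)) :=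
        mul_le_mul_right hc _
    _ = ENNReal.ofReal (2/((n:ℝ)*ε^2)) := by
        rw [mul_comm (ENNReal.ofReal _) _, ← mul_assoc, ENNReal.inv_mul_cancel hKne hKtop,
          one_mul]

end Stmt8

/-- `n Σᵢ (wᵢ/n − 1/n)² − (1 − 1/n) → 0` in probability;
in particular `n Σᵢ (wᵢ/n − 1/n)² → 1` in probability. -/
theorem stmt8 :
    (∀ ε > (0 : ℝ), Tendsto (fun n : ℕ =>
        multinomialMeasure n
          {f | ε ≤ |(n : ℝ) * ∑ i ∈ Finset.range n, ((mw n i f : ℝ) / n - 1 / n) ^ 2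
                    - (1 - 1 / (n : ℝ))|})
      atTop (nhds 0))
    ∧ (∀ ε > (0 : ℝ), Tendsto (fun n : ℕ =>
        multinomialMeasure n
          {f | ε ≤ |(n : ℝ) * ∑ i ∈ Finset.range n, ((mw n i f : ℝ) / n - 1 / n) ^ 2 - 1|})
      atTop (nhds 0)) := by
  have part1 : ∀ ε > (0 : ℝ), Tendsto (fun n : ℕ =>
      multinomialMeasure n
        {f | ε ≤ |(n : ℝ) * ∑ i ∈ Finset.range n, ((mw n i f : ℝ) / n - 1 / n) ^ 2
                  - (1 - 1 / (n : ℝ))|})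
      atTop (nhds 0) := by
    intro ε hε
    have hupper : Tendsto (fun n : ℕ => ENNReal.ofReal (2 / ((n:ℝ) * ε^2))) atTop (nhds 0) := by
      have hre : Tendsto (fun n : ℕ => (2:ℝ) / ((n:ℝ) * ε^2)) atTop (nhds 0) := by
        apply Tendsto.div_atTop (tendsto_const_nhds)
        exact Tendsto.atTop_mul_const (by positivity) tendsto_natCast_atTop_atTop
      have := (ENNReal.continuous_ofReal.tendsto 0).comp hre
      simpa [Function.comp_def] using this
    refine tendsto_of_tendsto_of_tendsto_of_le_of_le' tendsto_const_nhds hupper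
      (Eventually.of_forall (fun n => zero_le)) ?_
    filter_upwards [eventually_ge_atTop 2] with n hn
    have hset : {f : Fin n → Fin n |
        ε ≤ |(n : ℝ) * ∑ i ∈ Finset.range n, ((mw n i f : ℝ) / n - 1 / n) ^ 2
              - (1 - 1 / (n : ℝ))|}
        = {f : Fin n → Fin n | ε ≤ |(Stmt8.Dd n f - ((n:ℝ) - 1)) / n|} := by
      ext f
      simp only [Set.mem_setOf_eq]
      rw [Stmt8.X_eq hn f]
    rw [hset]
    exact Stmt8.meas_bound hn hε
  refine ⟨part1, ?_⟩
  intro ε hε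
  have h2 := part1 (ε/2) (by positivity)
  refine tendsto_of_tendsto_of_tendsto_of_le_of_le' tendsto_const_nhds h2
    (Eventually.of_forall (fun n => zero_le)) ?_
  filter_upwards [tendsto_natCast_atTop_atTop.eventually_ge_atTop (2/ε),
    eventually_ge_atTop 1] with n hn h1
  refine measure_mono ?_
  intro f hf
  simp only [Set.mem_setOf_eq] at hf ⊢
  set A : ℝ := (n : ℝ) * ∑ i ∈ Finset.range n, ((mw n i f : ℝ) / n - 1 / n) ^ 2 with hA
  have hn0 : (0:ℝ) < n := by exact_mod_cast h1
  have hninv : 1/(n:ℝ) ≤ ε/2 := by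
    rw [div_le_div_iff₀ hn0 (by norm_num)]
    calc (1:ℝ) * 2 = 2 := by ring
      _ = (2/ε) * ε := by field_simp
      _ ≤ (n:ℝ) * ε := mul_le_mul_of_nonneg_right hn hε.le
      _ = ε * (n:ℝ) := by ring
  have htri : |A - 1| ≤ |A - (1 - 1/(n:ℝ))| + |(1 - 1/(n:ℝ)) - 1| := abs_sub_le _ _ _
  have habs : |(1 - 1/(n:ℝ)) - 1| = 1/(n:ℝ) := by
    rw [show (1 - 1/(n:ℝ)) - 1 = -(1/(n:ℝ)) by ring, abs_neg, abs_of_pos (by positivity)]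
  rw [habs] at htri
  linarith
end

section
/- Let {γ_h}_{h≥1} be a summable sequence of real numbers. For multinomial weights (w_1^{(n)},...,w_n^{(n)}) ~ Multinomial(n; 1/n,...,1/n), the randomized cross term n Σ_{h=1}^{n−1} γ_h Σ_{j=1}^{n−h} (w_j^{(n)}/n − 1/n)(w_{j+h}^{(n)}/n − 1/n) converges to 0 in probability as n → ∞. -/
open MeasureTheory Finset Filter

noncomputable def xf (n a : ℕ) (v : Fin n) : ℝ := (if (v : ℕ) = a then 1 else 0) - 1 / n
noncomputable def S2 (n a b : ℕ) : ℝ := ∑ v : Fin n, xf n a v * xf n b v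
noncomputable def S4 (n a b c d : ℕ) : ℝ :=
  ∑ v : Fin n, xf n a v * xf n b v * (xf n c v * xf n d v)
noncomputable def Phi (n : ℕ) (aa : Fin 4 → ℕ) (p : Fin 4 → Fin n) : ℝ :=
  ∏ t : Fin n, ∑ v : Fin n, ∏ i ∈ Finset.univ.filter (fun i => p i = t), xf n (aa i) v
noncomputable def Yc (n a : ℕ) (f : Fin n → Fin n) : ℝ := (mw n a f : ℝ) - 1
noncomputable def Tq (n a b c d : ℕ) : ℝ :=
  ∑ f : Fin n → Fin n, Yc n a f * Yc n b f * (Yc n c f * Yc n d f)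
noncomputable def Xn (γ : ℕ → ℝ) (n : ℕ) (f : Fin n → Fin n) : ℝ :=
  (n : ℝ) * ∑ h ∈ Finset.Ico 1 n, γ h * ∑ j ∈ Finset.range (n - h),
    ((mw n j f : ℝ) / n - 1 / n) * ((mw n (j + h) f : ℝ) / n - 1 / n)
noncomputable def Ucr (n h : ℕ) (f : Fin n → Fin n) : ℝ :=
  ∑ j ∈ Finset.range (n - h), Yc n j f * Yc n (j + h) f

lemma filter_eq_cell {n a : ℕ} (ha : a < n) :
    (Finset.univ.filter fun v : Fin n => (v:ℕ) = a) = {⟨a, ha⟩} := by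
  ext v; simp [Fin.ext_iff]

lemma sum_xf {n a : ℕ} (ha : a < n) : ∑ v : Fin n, xf n a v = 0 := by
  have hn : (0:ℝ) < n := by exact_mod_cast Nat.pos_of_ne_zero (by omega)
  simp only [xf, Finset.sum_sub_distrib, Finset.sum_boole, filter_eq_cell ha]
  simp
  field_simp
  norm_num

lemma abs_xf_le {n : ℕ} (hn : 1 ≤ n) (a : ℕ) (v : Fin n) : |xf n a v| ≤ 1 := by
  have h1 : (1:ℝ) ≤ n := by exact_mod_cast hn
  have h0 : (0:ℝ) < n := by linarith
  have hinv : 1 / (n:ℝ) ≤ 1 := by rw [div_le_one h0]; exact h1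
  have hinv0 : 0 ≤ 1 / (n:ℝ) := by positivity
  unfold xf
  split <;> rw [abs_le] <;> constructor <;> linarith

lemma sum_abs_xf_le {n a : ℕ} (ha : a < n) : ∑ v : Fin n, |xf n a v| ≤ 2 := by
  have h0 : (0:ℝ) < n := by exact_mod_cast Nat.pos_of_ne_zero (by omega)
  have hinv : 1 / (n:ℝ) ≤ 1 := by rw [div_le_one h0]; exact_mod_cast Nat.pos_of_ne_zero (by omega)
  have hinv0 : 0 ≤ 1 / (n:ℝ) := by positivity
  set A : Fin n := ⟨a, ha⟩
  rw [← Finset.sum_sdiff (Finset.subset_univ {A})]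
  have h2 : ∑ v ∈ ({A} : Finset (Fin n)), |xf n a v| ≤ 1 := by
    rw [Finset.sum_singleton]
    unfold xf
    rw [if_pos rfl]
    rw [abs_of_nonneg (by linarith)]; linarith
  have h3 : ∑ v ∈ (Finset.univ \ {A} : Finset (Fin n)), |xf n a v| ≤ 1 := by
    have : ∀ v ∈ (Finset.univ \ {A} : Finset (Fin n)), |xf n a v| = 1 / n := by
      intro v hv
      simp only [Finset.mem_sdiff, Finset.mem_singleton] at hv
      have : ¬ ((v:ℕ) = a) := by
        intro h; exact hv.2 (Fin.ext h)
      unfold xf; rw [if_neg this]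
      rw [abs_of_nonpos (by linarith)]; ring
    rw [Finset.sum_congr rfl this, Finset.sum_const]
    have hcard : ((Finset.univ \ {A} : Finset (Fin n)).card : ℝ) ≤ n := by
      exact_mod_cast Finset.card_le_card (Finset.subset_univ _) |>.trans (by simp)
    rw [nsmul_eq_mul]
    calc ((Finset.univ \ {A} : Finset (Fin n)).card : ℝ) * (1/n) ≤ n * (1/n) := by
          apply mul_le_mul_of_nonneg_right hcard hinv0
      _ = 1 := by field_simp
  linarith

lemma S2_eq {n a b : ℕ} (ha : a < n) (hb : b < n) (hab : a ≠ b) :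
    S2 n a b = -(1 / n) := by
  have h0 : (0:ℝ) < n := by exact_mod_cast Nat.pos_of_ne_zero (by omega)
  set A : Fin n := ⟨a, ha⟩
  set B : Fin n := ⟨b, hb⟩
  have hAB : A ≠ B := by simp [A, B, Fin.ext_iff]; omega
  have hsub : ({A, B} : Finset (Fin n)) ⊆ Finset.univ := Finset.subset_univ _
  rw [S2, ← Finset.sum_sdiff hsub]
  have h1 : ∑ v ∈ ({A, B} : Finset (Fin n)), xf n a v * xf n b v
      = 2 * ((1 - 1/n) * (-(1/n))) := by
    rw [Finset.sum_pair hAB]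
    have e1 : xf n a A = 1 - 1/n := by unfold xf; rw [if_pos rfl]
    have e2 : xf n b A = -(1/n) := by
      unfold xf; rw [if_neg (by simp [A]; omega)]; ring
    have e3 : xf n a B = -(1/n) := by
      unfold xf; rw [if_neg (by simp [B]; omega)]; ring
    have e4 : xf n b B = 1 - 1/n := by unfold xf; rw [if_pos rfl]
    rw [e1, e2, e3, e4]; ring
  have h2 : ∑ v ∈ (Finset.univ \ {A, B} : Finset (Fin n)), xf n a v * xf n b v
      = ((n : ℝ) - 2) * (1/n)^2 := by
    have hv : ∀ v ∈ (Finset.univ \ {A, B} : Finset (Fin n)),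
        xf n a v * xf n b v = (1/n)^2 := by
      intro v hv
      simp only [Finset.mem_sdiff, Finset.mem_insert, Finset.mem_singleton] at hv
      have hva : ¬((v:ℕ) = a) := fun h => hv.2 (Or.inl (Fin.ext h))
      have hvb : ¬((v:ℕ) = b) := fun h => hv.2 (Or.inr (Fin.ext h))
      unfold xf; rw [if_neg hva, if_neg hvb]; ring
    rw [Finset.sum_congr rfl hv, Finset.sum_const, nsmul_eq_mul]
    congr 1
    have : (Finset.univ \ ({A, B} : Finset (Fin n))).card = n - 2 := by
      rw [Finset.card_sdiff_of_subset hsub, Finset.card_pair hAB, Finset.card_univ, Fintype.card_fin]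
    rw [this]
    have h2n : 2 ≤ n := by omega
    push_cast [Nat.cast_sub h2n]
    ring
  rw [h1, h2]
  field_simp
  ring

lemma abs_S2_le {n a : ℕ} (ha : a < n) (b : ℕ) : |S2 n a b| ≤ 2 := by
  have hn : 1 ≤ n := by omega
  calc |S2 n a b| ≤ ∑ v : Fin n, |xf n a v * xf n b v| := Finset.abs_sum_le_sum_abs _ _
    _ ≤ ∑ v : Fin n, |xf n a v| := by
        apply Finset.sum_le_sum
        intro v _
        rw [abs_mul]
        exact mul_le_of_le_one_right (abs_nonneg _) (abs_xf_le hn b v)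
    _ ≤ 2 := sum_abs_xf_le ha

lemma abs_S4_le {n a : ℕ} (ha : a < n) (b c d : ℕ) : |S4 n a b c d| ≤ 2 := by
  have hn : 1 ≤ n := by omega
  calc |S4 n a b c d| ≤ ∑ v : Fin n, |xf n a v * xf n b v * (xf n c v * xf n d v)| :=
        Finset.abs_sum_le_sum_abs _ _
    _ ≤ ∑ v : Fin n, |xf n a v| := by
        apply Finset.sum_le_sum
        intro v _
        rw [abs_mul, abs_mul, abs_mul]
        calc |xf n a v| * |xf n b v| * (|xf n c v| * |xf n d v|)
            ≤ |xf n a v| * 1 * (1 * 1) := by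
              gcongr <;> first | positivity | apply abs_xf_le hn
          _ = |xf n a v| := by ring
    _ ≤ 2 := sum_abs_xf_le ha

lemma S4_eq {n a b c d : ℕ} (ha : a < n) (hb : b < n) (hc : c < n) (hd : d < n)
    (hab : a ≠ b) (hac : a ≠ c) (had : a ≠ d) (hbc : b ≠ c) (hbd : b ≠ d) (hcd : c ≠ d) :
    S4 n a b c d = -3 / (n:ℝ)^3 := by
  have h4 : 4 ≤ n := by omega
  have h0 : (0:ℝ) < n := by exact_mod_cast Nat.pos_of_ne_zero (by omega)
  set A : Fin n := ⟨a, ha⟩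
  set B : Fin n := ⟨b, hb⟩
  set C : Fin n := ⟨c, hc⟩
  set D : Fin n := ⟨d, hd⟩
  have hs : ({A, B, C, D} : Finset (Fin n)).card = 4 := by
    rw [Finset.card_insert_of_notMem (by simp [A,B,C,D, Fin.ext_iff]; omega),
        Finset.card_insert_of_notMem (by simp [B,C,D, Fin.ext_iff]; omega),
        Finset.card_insert_of_notMem (by simp [C,D, Fin.ext_iff]; omega),
        Finset.card_singleton]
  have hsub : ({A, B, C, D} : Finset (Fin n)) ⊆ Finset.univ := Finset.subset_univ _
  rw [S4, ← Finset.sum_sdiff hsub]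
  have xfval : ∀ (e : ℕ) (v : Fin n), (v:ℕ) ≠ e → xf n e v = -(1/n) := by
    intro e v hv; unfold xf; rw [if_neg hv]; ring
  have xfval1 : ∀ (e : ℕ) (v : Fin n), (v:ℕ) = e → xf n e v = 1 - 1/n := by
    intro e v hv; unfold xf; rw [if_pos hv]
  have h1 : ∑ v ∈ ({A, B, C, D} : Finset (Fin n)), xf n a v * xf n b v * (xf n c v * xf n d v)
      = 4 * ((1 - 1/n) * (-(1/(n:ℝ)))^3) := by
    have l1 : Finset.sum {A,B,C,D} (fun v => xf n a v * xf n b v * (xf n c v * xf n d v))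
        = _ := Finset.sum_insert (s := {B,C,D}) (by simp [A,B,C,D, Fin.ext_iff]; omega)
    rw [l1, Finset.sum_insert (by simp [B,C,D, Fin.ext_iff]; omega),
        Finset.sum_insert (by simp [C,D, Fin.ext_iff]; omega), Finset.sum_singleton]
    rw [xfval1 a A rfl, xfval b A (by simp [A]; omega), xfval c A (by simp [A]; omega),
        xfval d A (by simp [A]; omega)]
    rw [xfval a B (by simp [B]; omega), xfval1 b B rfl, xfval c B (by simp [B]; omega),
        xfval d B (by simp [B]; omega)]
    rw [xfval a C (by simp [C]; omega), xfval b C (by simp [C]; omega), xfval1 c C rfl,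
        xfval d C (by simp [C]; omega)]
    rw [xfval a D (by simp [D]; omega), xfval b D (by simp [D]; omega),
        xfval c D (by simp [D]; omega), xfval1 d D rfl]
    ring
  have h2 : ∑ v ∈ (Finset.univ \ {A, B, C, D} : Finset (Fin n)),
        xf n a v * xf n b v * (xf n c v * xf n d v) = ((n:ℝ) - 4) * (1/n)^4 := by
    have hv : ∀ v ∈ (Finset.univ \ {A, B, C, D} : Finset (Fin n)),
        xf n a v * xf n b v * (xf n c v * xf n d v) = (1/n)^4 := by
      intro v hv
      simp only [Finset.mem_sdiff, Finset.mem_insert, Finset.mem_singleton, Finset.mem_univ,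
        true_and] at hv
      push_neg at hv
      obtain ⟨hva, hvb, hvc, hvd⟩ := hv
      rw [xfval a v (fun h => hva (Fin.ext h)), xfval b v (fun h => hvb (Fin.ext h)),
          xfval c v (fun h => hvc (Fin.ext h)), xfval d v (fun h => hvd (Fin.ext h))]
      ring
    rw [Finset.sum_congr rfl hv, Finset.sum_const, nsmul_eq_mul]
    congr 1
    rw [Finset.card_sdiff_of_subset hsub, hs, Finset.card_univ, Fintype.card_fin]
    push_cast [Nat.cast_sub h4]
    ring
  rw [h1, h2]
  field_simp
  ring

lemma Phi_const (n : ℕ) (aa : Fin 4 → ℕ) (v : Fin n) :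
    Phi n aa (fun _ => v) = (n:ℝ)^(n-1) * S4 n (aa 0) (aa 1) (aa 2) (aa 3) := by
  unfold Phi
  rw [← Finset.prod_sdiff (Finset.subset_univ {v}), Finset.prod_singleton]
  have h1 : (Finset.univ.filter fun i : Fin 4 => v = v) = Finset.univ := by
    apply Finset.filter_true_of_mem; intro i _; rfl
  have h2 : ∀ t ∈ (Finset.univ \ {v} : Finset (Fin n)),
      (∑ u : Fin n, ∏ i ∈ Finset.univ.filter (fun i : Fin 4 => v = t), xf n (aa i) u) = n := by
    intro t ht
    simp only [Finset.mem_sdiff, Finset.mem_singleton] at ht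
    rw [Finset.filter_false_of_mem (fun i _ => (fun h => ht.2 h.symm : ¬ v = t))]
    simp
  rw [Finset.prod_congr rfl h2, Finset.prod_const, h1]
  have hcard : (Finset.univ \ {v} : Finset (Fin n)).card = n - 1 := by
    rw [Finset.card_sdiff_of_subset (Finset.subset_univ _), Finset.card_singleton, Finset.card_univ,
      Fintype.card_fin]
  rw [hcard]
  have h3 : (∑ u : Fin n, ∏ i : Fin 4, xf n (aa i) u) = S4 n (aa 0) (aa 1) (aa 2) (aa 3) := by
    apply Finset.sum_congr rfl
    intro u _
    rw [Fin.prod_univ_four]; ring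
  rw [h3]

lemma Phi_pairA (n : ℕ) (aa : Fin 4 → ℕ) (q1 q2 : Fin n) (hq : q1 ≠ q2) :
    Phi n aa (![q1, q1, q2, q2]) =
      (n:ℝ)^(n-2) * (S2 n (aa 0) (aa 1) * S2 n (aa 2) (aa 3)) := by
  unfold Phi
  have hsub : ({q1, q2} : Finset (Fin n)) ⊆ Finset.univ := Finset.subset_univ _
  rw [← Finset.prod_sdiff hsub, Finset.prod_pair hq]
  have hf1 : (Finset.univ.filter fun i : Fin 4 => ![q1, q1, q2, q2] i = q1) = {0, 1} := by
    ext i; fin_cases i <;> simp [hq, hq.symm]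
  have hf2 : (Finset.univ.filter fun i : Fin 4 => ![q1, q1, q2, q2] i = q2) = {2, 3} := by
    ext i; fin_cases i <;> simp [hq, hq.symm]
  have hg1 : (∑ u : Fin n, ∏ i ∈ (Finset.univ.filter fun i : Fin 4 => ![q1, q1, q2, q2] i = q1), xf n (aa i) u) = S2 n (aa 0) (aa 1) := by
    rw [hf1]; apply Finset.sum_congr rfl; intro u _
    rw [Finset.prod_insert (by decide), Finset.prod_singleton]
  have hg2 : (∑ u : Fin n, ∏ i ∈ (Finset.univ.filter fun i : Fin 4 => ![q1, q1, q2, q2] i = q2), xf n (aa i) u) = S2 n (aa 2) (aa 3) := by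
    rw [hf2]; apply Finset.sum_congr rfl; intro u _
    rw [Finset.prod_insert (by decide), Finset.prod_singleton]
  rw [hg1, hg2]
  have h2 : ∀ t ∈ (Finset.univ \ {q1, q2} : Finset (Fin n)),
      (∑ u : Fin n, ∏ i ∈ Finset.univ.filter (fun i : Fin 4 => ![q1, q1, q2, q2] i = t), xf n (aa i) u) = n := by
    intro t ht
    simp only [Finset.mem_sdiff, Finset.mem_insert, Finset.mem_singleton] at ht
    have : (Finset.univ.filter fun i : Fin 4 => ![q1, q1, q2, q2] i = t) = ∅ := by
      apply Finset.filter_false_of_mem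
      intro i _
      fin_cases i <;> simp <;>
        try first
          | exact fun h => ht.2 (Or.inl h.symm)
          | exact fun h => ht.2 (Or.inr h.symm)
    rw [this]; simp
  rw [Finset.prod_congr rfl h2, Finset.prod_const]
  have hcard : (Finset.univ \ {q1, q2} : Finset (Fin n)).card = n - 2 := by
    rw [Finset.card_sdiff_of_subset hsub]; simp [Finset.card_pair hq]
  rw [hcard]

lemma Phi_pairB (n : ℕ) (aa : Fin 4 → ℕ) (q1 q2 : Fin n) (hq : q1 ≠ q2) :
    Phi n aa (![q1, q2, q1, q2]) =
      (n:ℝ)^(n-2) * (S2 n (aa 0) (aa 2) * S2 n (aa 1) (aa 3)) := by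
  unfold Phi
  have hsub : ({q1, q2} : Finset (Fin n)) ⊆ Finset.univ := Finset.subset_univ _
  rw [← Finset.prod_sdiff hsub, Finset.prod_pair hq]
  have hf1 : (Finset.univ.filter fun i : Fin 4 => ![q1, q2, q1, q2] i = q1) = {0, 2} := by
    ext i; fin_cases i <;> simp [hq, hq.symm]
  have hf2 : (Finset.univ.filter fun i : Fin 4 => ![q1, q2, q1, q2] i = q2) = {1, 3} := by
    ext i; fin_cases i <;> simp [hq, hq.symm]
  have hg1 : (∑ u : Fin n, ∏ i ∈ (Finset.univ.filter fun i : Fin 4 => ![q1, q2, q1, q2] i = q1), xf n (aa i) u) = S2 n (aa 0) (aa 2) := by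
    rw [hf1]; apply Finset.sum_congr rfl; intro u _
    rw [Finset.prod_insert (by decide), Finset.prod_singleton]
  have hg2 : (∑ u : Fin n, ∏ i ∈ (Finset.univ.filter fun i : Fin 4 => ![q1, q2, q1, q2] i = q2), xf n (aa i) u) = S2 n (aa 1) (aa 3) := by
    rw [hf2]; apply Finset.sum_congr rfl; intro u _
    rw [Finset.prod_insert (by decide), Finset.prod_singleton]
  rw [hg1, hg2]
  have h2 : ∀ t ∈ (Finset.univ \ {q1, q2} : Finset (Fin n)),
      (∑ u : Fin n, ∏ i ∈ Finset.univ.filter (fun i : Fin 4 => ![q1, q2, q1, q2] i = t), xf n (aa i) u) = n := by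
    intro t ht
    simp only [Finset.mem_sdiff, Finset.mem_insert, Finset.mem_singleton] at ht
    have : (Finset.univ.filter fun i : Fin 4 => ![q1, q2, q1, q2] i = t) = ∅ := by
      apply Finset.filter_false_of_mem
      intro i _
      fin_cases i <;> simp <;>
        try first
          | exact fun h => ht.2 (Or.inl h.symm)
          | exact fun h => ht.2 (Or.inr h.symm)
    rw [this]; simp
  rw [Finset.prod_congr rfl h2, Finset.prod_const]
  have hcard : (Finset.univ \ {q1, q2} : Finset (Fin n)).card = n - 2 := by
    rw [Finset.card_sdiff_of_subset hsub]; simp [Finset.card_pair hq]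
  rw [hcard]

lemma Phi_pairC (n : ℕ) (aa : Fin 4 → ℕ) (q1 q2 : Fin n) (hq : q1 ≠ q2) :
    Phi n aa (![q1, q2, q2, q1]) =
      (n:ℝ)^(n-2) * (S2 n (aa 0) (aa 3) * S2 n (aa 1) (aa 2)) := by
  unfold Phi
  have hsub : ({q1, q2} : Finset (Fin n)) ⊆ Finset.univ := Finset.subset_univ _
  rw [← Finset.prod_sdiff hsub, Finset.prod_pair hq]
  have hf1 : (Finset.univ.filter fun i : Fin 4 => ![q1, q2, q2, q1] i = q1) = {0, 3} := by
    ext i; fin_cases i <;> simp [hq, hq.symm]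
  have hf2 : (Finset.univ.filter fun i : Fin 4 => ![q1, q2, q2, q1] i = q2) = {1, 2} := by
    ext i; fin_cases i <;> simp [hq, hq.symm]
  have hg1 : (∑ u : Fin n, ∏ i ∈ (Finset.univ.filter fun i : Fin 4 => ![q1, q2, q2, q1] i = q1), xf n (aa i) u) = S2 n (aa 0) (aa 3) := by
    rw [hf1]; apply Finset.sum_congr rfl; intro u _
    rw [Finset.prod_insert (by decide), Finset.prod_singleton]
  have hg2 : (∑ u : Fin n, ∏ i ∈ (Finset.univ.filter fun i : Fin 4 => ![q1, q2, q2, q1] i = q2), xf n (aa i) u) = S2 n (aa 1) (aa 2) := by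
    rw [hf2]; apply Finset.sum_congr rfl; intro u _
    rw [Finset.prod_insert (by decide), Finset.prod_singleton]
  rw [hg1, hg2]
  have h2 : ∀ t ∈ (Finset.univ \ {q1, q2} : Finset (Fin n)),
      (∑ u : Fin n, ∏ i ∈ Finset.univ.filter (fun i : Fin 4 => ![q1, q2, q2, q1] i = t), xf n (aa i) u) = n := by
    intro t ht
    simp only [Finset.mem_sdiff, Finset.mem_insert, Finset.mem_singleton] at ht
    have : (Finset.univ.filter fun i : Fin 4 => ![q1, q2, q2, q1] i = t) = ∅ := by
      apply Finset.filter_false_of_mem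
      intro i _
      fin_cases i <;> simp <;>
        try first
          | exact fun h => ht.2 (Or.inl h.symm)
          | exact fun h => ht.2 (Or.inr h.symm)
    rw [this]; simp
  rw [Finset.prod_congr rfl h2, Finset.prod_const]
  have hcard : (Finset.univ \ {q1, q2} : Finset (Fin n)).card = n - 2 := by
    rw [Finset.card_sdiff_of_subset hsub]; simp [Finset.card_pair hq]
  rw [hcard]

lemma classify4 {n : ℕ} (p : Fin 4 → Fin n) :
    (∀ i, p i = p 0) ∨
    (p 0 = p 1 ∧ p 2 = p 3 ∧ p 0 ≠ p 2) ∨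
    (p 0 = p 2 ∧ p 1 = p 3 ∧ p 0 ≠ p 1) ∨
    (p 0 = p 3 ∧ p 1 = p 2 ∧ p 0 ≠ p 1) ∨
    (∃ i, ∀ i', i' ≠ i → p i' ≠ p i) := by
  by_cases h1 : p 1 = p 0 <;> by_cases h2 : p 2 = p 0 <;> by_cases h3 : p 3 = p 0
  · left; intro i; fin_cases i <;> simp_all
  · right; right; right; right
    exact ⟨3, by intro i' hi'; fin_cases i' <;> simp_all <;> exact fun h => absurd h.symm (by assumption)⟩
  · right; right; right; right
    exact ⟨2, by intro i' hi'; fin_cases i' <;> simp_all <;> exact fun h => absurd h.symm (by assumption)⟩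
  · by_cases h23 : p 3 = p 2
    · right; left
      exact ⟨h1.symm, h23.symm, fun h => h2 h.symm⟩
    · right; right; right; right
      exact ⟨3, by intro i' hi'; fin_cases i' <;> simp_all <;> exact fun h => absurd h.symm (by assumption)⟩
  · right; right; right; right
    exact ⟨1, by intro i' hi'; fin_cases i' <;> simp_all <;> exact fun h => absurd h.symm (by assumption)⟩
  · by_cases h13 : p 3 = p 1
    · right; right; left
      exact ⟨h2.symm, h13.symm, fun h => h1 h.symm⟩
    · right; right; right; right
      exact ⟨1, by intro i' hi'; fin_cases i' <;> simp_all <;> exact fun h => absurd h.symm (by assumption)⟩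
  · by_cases h12 : p 2 = p 1
    · right; right; right; left
      exact ⟨h3.symm, h12.symm, fun h => h1 h.symm⟩
    · right; right; right; right
      exact ⟨1, by intro i' hi'; fin_cases i' <;> simp_all <;> exact fun h => absurd h.symm (by assumption)⟩
  · right; right; right; right
    exact ⟨0, by intro i' hi'; fin_cases i' <;> simp_all <;> exact fun h => absurd h.symm (by assumption)⟩

lemma Phi_lonely {n : ℕ} (aa : Fin 4 → ℕ) (haa : ∀ i, aa i < n) (p : Fin 4 → Fin n)
    (i : Fin 4) (hi : ∀ i', i' ≠ i → p i' ≠ p i) : Phi n aa p = 0 := by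
  apply Finset.prod_eq_zero (Finset.mem_univ (p i))
  have hfi : Finset.univ.filter (fun i' => p i' = p i) = {i} := by
    ext i'
    simp only [Finset.mem_filter, Finset.mem_univ, true_and, Finset.mem_singleton]
    constructor
    · intro h; by_contra hne; exact hi i' hne h
    · intro h; subst h; rfl
  rw [hfi]
  simp only [Finset.prod_singleton]
  exact sum_xf (haa i)

lemma sum_Phi {n : ℕ} (aa : Fin 4 → ℕ) (haa : ∀ i, aa i < n) :
    ∑ p : Fin 4 → Fin n, Phi n aa p
    = (n:ℝ) * ((n:ℝ)^(n-1) * S4 n (aa 0) (aa 1) (aa 2) (aa 3))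
    + ((n*n - n : ℕ) : ℝ) * ((n:ℝ)^(n-2) *
        (S2 n (aa 0) (aa 1) * S2 n (aa 2) (aa 3)
        + S2 n (aa 0) (aa 2) * S2 n (aa 1) (aa 3)
        + S2 n (aa 0) (aa 3) * S2 n (aa 1) (aa 2))) := by
  classical
  set A : Finset (Fin 4 → Fin n) := Finset.univ.filter (fun p => ∀ i, p i = p 0) with hA
  set B1 : Finset (Fin 4 → Fin n) :=
    Finset.univ.filter (fun p => p 0 = p 1 ∧ p 2 = p 3 ∧ p 0 ≠ p 2) with hB1
  set B2 : Finset (Fin 4 → Fin n) :=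
    Finset.univ.filter (fun p => p 0 = p 2 ∧ p 1 = p 3 ∧ p 0 ≠ p 1) with hB2
  set B3 : Finset (Fin 4 → Fin n) :=
    Finset.univ.filter (fun p => p 0 = p 3 ∧ p 1 = p 2 ∧ p 0 ≠ p 1) with hB3
  have key : ∑ p : Fin 4 → Fin n, Phi n aa p = ∑ p ∈ A ∪ B1 ∪ B2 ∪ B3, Phi n aa p := by
    symm
    apply Finset.sum_subset (Finset.subset_univ _)
    intro p _ hp
    simp only [A, B1, B2, B3, Finset.mem_union, Finset.mem_filter, Finset.mem_univ,
      true_and] at hp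
    push_neg at hp
    rcases classify4 p with h | h | h | h | ⟨i, hi⟩
    · exact absurd h (by tauto)
    · exact absurd h (by tauto)
    · exact absurd h (by tauto)
    · exact absurd h (by tauto)
    · exact Phi_lonely aa haa p i hi
  -- disjointness
  have dA1 : Disjoint A B1 := by
    rw [Finset.disjoint_left]
    intro p hp hp'
    simp only [A, B1, Finset.mem_filter, Finset.mem_univ, true_and] at hp hp'
    exact hp'.2.2 ((hp 2).symm ▸ (hp 0).symm ▸ rfl)
  have dA2 : Disjoint A B2 := by
    rw [Finset.disjoint_left]
    intro p hp hp'
    simp only [A, B2, Finset.mem_filter, Finset.mem_univ, true_and] at hp hp'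
    exact hp'.2.2 ((hp 1).symm ▸ (hp 0).symm ▸ rfl)
  have dA3 : Disjoint A B3 := by
    rw [Finset.disjoint_left]
    intro p hp hp'
    simp only [A, B3, Finset.mem_filter, Finset.mem_univ, true_and] at hp hp'
    exact hp'.2.2 ((hp 1).symm ▸ (hp 0).symm ▸ rfl)
  have d12 : Disjoint B1 B2 := by
    rw [Finset.disjoint_left]
    intro p hp hp'
    simp only [B1, B2, Finset.mem_filter, Finset.mem_univ, true_and] at hp hp'
    exact hp.2.2 hp'.1
  have d13 : Disjoint B1 B3 := by
    rw [Finset.disjoint_left]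
    intro p hp hp'
    simp only [B1, B3, Finset.mem_filter, Finset.mem_univ, true_and] at hp hp'
    exact hp.2.2 (hp'.1.trans hp.2.1.symm)
  have d23 : Disjoint B2 B3 := by
    rw [Finset.disjoint_left]
    intro p hp hp'
    simp only [B2, B3, Finset.mem_filter, Finset.mem_univ, true_and] at hp hp'
    exact hp.2.2 (hp.1.trans hp'.2.1.symm)
  rw [key, Finset.sum_union (by
      exact Finset.disjoint_union_left.mpr ⟨Finset.disjoint_union_left.mpr ⟨dA3, d13⟩, d23⟩),
    Finset.sum_union (Finset.disjoint_union_left.mpr ⟨dA2, d12⟩),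
    Finset.sum_union dA1]
  -- class A
  have hAimg : A = Finset.image (fun v : Fin n => (fun _ : Fin 4 => v)) Finset.univ := by
    ext p
    simp only [A, Finset.mem_filter, Finset.mem_univ, true_and, Finset.mem_image]
    constructor
    · intro h; exact ⟨p 0, funext fun i => (h i).symm⟩
    · rintro ⟨v, rfl⟩; intro i; rfl
  have hsumA : ∑ p ∈ A, Phi n aa p
      = (n:ℝ) * ((n:ℝ)^(n-1) * S4 n (aa 0) (aa 1) (aa 2) (aa 3)) := by
    rw [hAimg, Finset.sum_image (by
      intro x _ y _ h
      exact congrFun h 0)]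
    rw [Finset.sum_congr rfl (fun v _ => Phi_const n aa v), Finset.sum_const,
      Finset.card_univ, Fintype.card_fin, nsmul_eq_mul]
  -- class B1
  have hB1img : B1 = Finset.image (fun q : Fin n × Fin n => ![q.1, q.1, q.2, q.2])
      Finset.univ.offDiag := by
    ext p
    simp only [B1, Finset.mem_filter, Finset.mem_univ, true_and, Finset.mem_image,
      Finset.mem_offDiag]
    constructor
    · rintro ⟨h01, h23, h02⟩
      refine ⟨(p 0, p 2), h02, ?_⟩
      funext i; fin_cases i <;> simp [h01.symm, h23.symm] <;> try rfl
    · rintro ⟨q, hq, rfl⟩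
      refine ⟨by simp, by simp, by simpa using hq⟩
  have hsumB1 : ∑ p ∈ B1, Phi n aa p
      = ((n*n - n : ℕ) : ℝ) * ((n:ℝ)^(n-2) * (S2 n (aa 0) (aa 1) * S2 n (aa 2) (aa 3))) := by
    rw [hB1img, Finset.sum_image (by
      rintro x hx y hy h
      have h0 := congrFun h 0
      have h2 := congrFun h 2
      simp at h0 h2
      exact Prod.ext h0 h2)]
    rw [Finset.sum_congr rfl (fun q hq => Phi_pairA n aa q.1 q.2 (Finset.mem_offDiag.mp hq).2.2),
      Finset.sum_const, Finset.offDiag_card, Finset.card_univ, Fintype.card_fin, nsmul_eq_mul]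
  have hB2img : B2 = Finset.image (fun q : Fin n × Fin n => ![q.1, q.2, q.1, q.2])
      Finset.univ.offDiag := by
    ext p
    simp only [B2, Finset.mem_filter, Finset.mem_univ, true_and, Finset.mem_image,
      Finset.mem_offDiag]
    constructor
    · rintro ⟨h02, h13, h01⟩
      refine ⟨(p 0, p 1), h01, ?_⟩
      funext i; fin_cases i <;> simp [h02.symm, h13.symm] <;> try rfl
    · rintro ⟨q, hq, rfl⟩
      refine ⟨by simp, by simp, by simpa using hq⟩
  have hsumB2 : ∑ p ∈ B2, Phi n aa p
      = ((n*n - n : ℕ) : ℝ) * ((n:ℝ)^(n-2) * (S2 n (aa 0) (aa 2) * S2 n (aa 1) (aa 3))) := by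
    rw [hB2img, Finset.sum_image (by
      rintro x hx y hy h
      have h0 := congrFun h 0
      have h1 := congrFun h 1
      simp at h0 h1
      exact Prod.ext h0 h1)]
    rw [Finset.sum_congr rfl (fun q hq => Phi_pairB n aa q.1 q.2 (Finset.mem_offDiag.mp hq).2.2),
      Finset.sum_const, Finset.offDiag_card, Finset.card_univ, Fintype.card_fin, nsmul_eq_mul]
  have hB3img : B3 = Finset.image (fun q : Fin n × Fin n => ![q.1, q.2, q.2, q.1])
      Finset.univ.offDiag := by
    ext p
    simp only [B3, Finset.mem_filter, Finset.mem_univ, true_and, Finset.mem_image,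
      Finset.mem_offDiag]
    constructor
    · rintro ⟨h03, h12, h01⟩
      refine ⟨(p 0, p 1), h01, ?_⟩
      funext i; fin_cases i <;> simp [h03.symm, h12.symm] <;> try rfl
    · rintro ⟨q, hq, rfl⟩
      refine ⟨by simp, by simp, by simpa using hq⟩
  have hsumB3 : ∑ p ∈ B3, Phi n aa p
      = ((n*n - n : ℕ) : ℝ) * ((n:ℝ)^(n-2) * (S2 n (aa 0) (aa 3) * S2 n (aa 1) (aa 2))) := by
    rw [hB3img, Finset.sum_image (by
      rintro x hx y hy h
      have h0 := congrFun h 0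
      have h1 := congrFun h 1
      simp at h0 h1
      exact Prod.ext h0 h1)]
    rw [Finset.sum_congr rfl (fun q hq => Phi_pairC n aa q.1 q.2 (Finset.mem_offDiag.mp hq).2.2),
      Finset.sum_const, Finset.offDiag_card, Finset.card_univ, Fintype.card_fin, nsmul_eq_mul]
  rw [hsumA, hsumB1, hsumB2, hsumB3]
  ring

lemma Yc_eq_sum {n : ℕ} (hn : 1 ≤ n) (a : ℕ) (f : Fin n → Fin n) :
    Yc n a f = ∑ j : Fin n, xf n a (f j) := by
  have h0 : (0:ℝ) < n := by exact_mod_cast Nat.pos_of_ne_zero (by omega)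
  unfold Yc xf mw
  rw [Finset.sum_sub_distrib, Finset.sum_boole, Finset.sum_const, Finset.card_univ,
    Fintype.card_fin, nsmul_eq_mul]
  field_simp

lemma master {n : ℕ} {a b c d : ℕ} (ha : a < n) (hb : b < n) (hc : c < n) (hd : d < n) :
    Tq n a b c d
    = (n:ℝ) * ((n:ℝ)^(n-1) * S4 n a b c d)
    + ((n*n - n : ℕ) : ℝ) * ((n:ℝ)^(n-2) *
        (S2 n a b * S2 n c d + S2 n a c * S2 n b d + S2 n a d * S2 n b c)) := by
  have hn : 1 ≤ n := by omega
  unfold Tq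
  set aa : Fin 4 → ℕ := ![a, b, c, d] with haadef
  have haa : ∀ i, aa i < n := by intro i; fin_cases i <;> simpa [aa]
  have step1 : ∑ f : Fin n → Fin n, Yc n a f * Yc n b f * (Yc n c f * Yc n d f)
      = ∑ f : Fin n → Fin n, ∏ i : Fin 4, (∑ j : Fin n, xf n (aa i) (f j)) := by
    apply Finset.sum_congr rfl
    intro f _
    rw [Fin.prod_univ_four]
    simp only [aa, Matrix.cons_val_zero, Matrix.cons_val_one, Matrix.head_cons,
      Matrix.cons_val_two, Matrix.tail_cons, Matrix.cons_val_three, Matrix.head_fin_const]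
    rw [← Yc_eq_sum hn a f, ← Yc_eq_sum hn b f, ← Yc_eq_sum hn c f, ← Yc_eq_sum hn d f]
    ring
  have step2 : ∀ f : Fin n → Fin n, ∏ i : Fin 4, (∑ j : Fin n, xf n (aa i) (f j))
      = ∑ p : Fin 4 → Fin n, ∏ i : Fin 4, xf n (aa i) (f (p i)) := by
    intro f
    rw [Finset.prod_univ_sum (fun _ => (Finset.univ : Finset (Fin n)))
      (fun i j => xf n (aa i) (f j)), Fintype.piFinset_univ]
  have step3 : ∀ p : Fin 4 → Fin n,
      ∑ f : Fin n → Fin n, ∏ i : Fin 4, xf n (aa i) (f (p i)) = Phi n aa p := by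
    intro p
    have e1 : ∀ g : Fin n → Fin n, ∏ i : Fin 4, xf n (aa i) (g (p i))
        = ∏ t : Fin n, ∏ i ∈ Finset.univ.filter (fun i => p i = t), xf n (aa i) (g t) := by
      intro g
      rw [← Finset.prod_fiberwise_of_maps_to (fun i _ => Finset.mem_univ (p i))
        (fun i => xf n (aa i) (g (p i)))]
      apply Finset.prod_congr rfl
      intro t _
      apply Finset.prod_congr rfl
      intro i hi
      rw [(Finset.mem_filter.mp hi).2]
    rw [Finset.sum_congr rfl (fun g _ => e1 g)]
    have e2 := Finset.prod_univ_sum (fun _ : Fin n => (Finset.univ : Finset (Fin n)))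
      (fun t v => ∏ i ∈ Finset.univ.filter (fun i => p i = t), xf n (aa i) v)
    rw [Fintype.piFinset_univ] at e2
    exact e2.symm
  rw [step1, Finset.sum_congr rfl (fun f _ => step2 f), Finset.sum_comm,
    Finset.sum_congr rfl (fun p _ => step3 p), sum_Phi aa haa]
  simp [aa]

lemma coeff1 {n : ℕ} (hn : 1 ≤ n) : (n:ℝ) * (n:ℝ)^(n-1) = (n:ℝ)^n := by
  rw [← pow_succ']
  congr 1
  omega

lemma coeff2 {n : ℕ} (hn : 1 ≤ n) : ((n*n - n : ℕ) : ℝ) * (n:ℝ)^(n-2) ≤ (n:ℝ)^n := by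
  rcases Nat.lt_or_ge n 2 with h | h
  · have : n = 1 := by omega
    subst this; norm_num
  · have e : (n:ℝ)^(n-2) * (n:ℝ)^2 = (n:ℝ)^n := by
      rw [← pow_add]; congr 1; omega
    have hc : ((n*n - n : ℕ) : ℝ) ≤ (n:ℝ)^2 := by
      have : ((n*n - n : ℕ) : ℝ) ≤ ((n*n : ℕ) : ℝ) := by
        exact_mod_cast Nat.cast_le.mpr (Nat.sub_le _ _)
      calc ((n*n - n : ℕ) : ℝ) ≤ ((n*n : ℕ) : ℝ) := this
        _ = (n:ℝ)^2 := by push_cast; ring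
    calc ((n*n - n : ℕ) : ℝ) * (n:ℝ)^(n-2) ≤ (n:ℝ)^2 * (n:ℝ)^(n-2) := by
          apply mul_le_mul_of_nonneg_right hc (by positivity)
      _ = (n:ℝ)^n := by rw [mul_comm]; exact e

lemma abs_Tq_le {n a b c d : ℕ} (ha : a < n) (hb : b < n) (hc : c < n) (hd : d < n) :
    |Tq n a b c d| ≤ 14 * (n:ℝ)^n := by
  have hn : 1 ≤ n := by omega
  rw [master ha hb hc hd]
  have h1 : |(n:ℝ) * ((n:ℝ)^(n-1) * S4 n a b c d)| ≤ 2 * (n:ℝ)^n := by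
    rw [abs_mul, abs_mul, abs_of_nonneg (by positivity : (0:ℝ) ≤ (n:ℝ)),
      abs_of_nonneg (by positivity : (0:ℝ) ≤ (n:ℝ)^(n-1)), ← mul_assoc, coeff1 hn]
    calc (n:ℝ)^n * |S4 n a b c d| ≤ (n:ℝ)^n * 2 := by
          apply mul_le_mul_of_nonneg_left (abs_S4_le ha b c d) (by positivity)
      _ = 2 * (n:ℝ)^n := by ring
  have hS : |S2 n a b * S2 n c d + S2 n a c * S2 n b d + S2 n a d * S2 n b c| ≤ 12 := by
    have l1 : |S2 n a b * S2 n c d| ≤ 4 := by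
      rw [abs_mul]
      calc |S2 n a b| * |S2 n c d| ≤ 2 * 2 := by
            apply mul_le_mul (abs_S2_le ha b) (abs_S2_le hc d) (abs_nonneg _) (by norm_num)
        _ = 4 := by norm_num
    have l2 : |S2 n a c * S2 n b d| ≤ 4 := by
      rw [abs_mul]
      calc |S2 n a c| * |S2 n b d| ≤ 2 * 2 := by
            apply mul_le_mul (abs_S2_le ha c) (abs_S2_le hb d) (abs_nonneg _) (by norm_num)
        _ = 4 := by norm_num
    have l3 : |S2 n a d * S2 n b c| ≤ 4 := by
      rw [abs_mul]
      calc |S2 n a d| * |S2 n b c| ≤ 2 * 2 := by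
            apply mul_le_mul (abs_S2_le ha d) (abs_S2_le hb c) (abs_nonneg _) (by norm_num)
        _ = 4 := by norm_num
    calc |S2 n a b * S2 n c d + S2 n a c * S2 n b d + S2 n a d * S2 n b c|
        ≤ |S2 n a b * S2 n c d + S2 n a c * S2 n b d| + |S2 n a d * S2 n b c| := abs_add_le _ _
      _ ≤ (|S2 n a b * S2 n c d| + |S2 n a c * S2 n b d|) + |S2 n a d * S2 n b c| := by
          have := abs_add_le (S2 n a b * S2 n c d) (S2 n a c * S2 n b d)
          linarith
      _ ≤ 12 := by linarith
  have h2 : |((n*n - n : ℕ) : ℝ) * ((n:ℝ)^(n-2) *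
      (S2 n a b * S2 n c d + S2 n a c * S2 n b d + S2 n a d * S2 n b c))| ≤ 12 * (n:ℝ)^n := by
    rw [abs_mul, abs_mul, Nat.abs_cast, abs_of_nonneg (by positivity : (0:ℝ) ≤ (n:ℝ)^(n-2))]
    calc ((n*n - n : ℕ) : ℝ) * ((n:ℝ)^(n-2) * |S2 n a b * S2 n c d + S2 n a c * S2 n b d + S2 n a d * S2 n b c|)
        ≤ ((n*n - n : ℕ) : ℝ) * ((n:ℝ)^(n-2) * 12) := by
          apply mul_le_mul_of_nonneg_left _ (by positivity)
          apply mul_le_mul_of_nonneg_left hS (by positivity)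
      _ = (((n*n - n : ℕ) : ℝ) * (n:ℝ)^(n-2)) * 12 := by ring
      _ ≤ (n:ℝ)^n * 12 := by
          apply mul_le_mul_of_nonneg_right (coeff2 hn) (by norm_num)
      _ = 12 * (n:ℝ)^n := by ring
  calc |_ + _| ≤ _ := abs_add_le _ _
    _ ≤ 2 * (n:ℝ)^n + 12 * (n:ℝ)^n := add_le_add h1 h2
    _ = 14 * (n:ℝ)^n := by ring

lemma abs_Tq_le_distinct {n a b c d : ℕ} (ha : a < n) (hb : b < n) (hc : c < n) (hd : d < n)
    (hab : a ≠ b) (hac : a ≠ c) (had : a ≠ d) (hbc : b ≠ c) (hbd : b ≠ d) (hcd : c ≠ d) :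
    |Tq n a b c d| ≤ 6 * (n:ℝ)^(n-2) := by
  have hn4 : 4 ≤ n := by omega
  have hn : 1 ≤ n := by omega
  have h0 : (0:ℝ) < n := by exact_mod_cast Nat.pos_of_ne_zero (by omega)
  rw [master ha hb hc hd, S4_eq ha hb hc hd hab hac had hbc hbd hcd,
    S2_eq ha hb hab, S2_eq hc hd hcd, S2_eq ha hc hac, S2_eq hb hd hbd,
    S2_eq ha hd had, S2_eq hb hc hbc]
  have e1 : (n:ℝ) * ((n:ℝ)^(n-1) * (-3 / (n:ℝ)^3)) = -3 * (n:ℝ)^(n-2) / (n:ℝ) := by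
    rw [show (n:ℝ) * ((n:ℝ)^(n-1) * (-3 / (n:ℝ)^3)) = ((n:ℝ) * (n:ℝ)^(n-1)) * (-3 / (n:ℝ)^3) by ring,
      show (n:ℝ) * (n:ℝ)^(n-1) = (n:ℝ)^n by rw [← pow_succ']; congr 1; omega]
    rw [show (n:ℝ)^n = (n:ℝ)^(n-2) * (n:ℝ)^2 by rw [← pow_add]; congr 1; omega]
    field_simp
  have e2 : (-(1/(n:ℝ)) * -(1/(n:ℝ)) + -(1/(n:ℝ)) * -(1/(n:ℝ)) + -(1/(n:ℝ)) * -(1/(n:ℝ)))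
      = 3 / (n:ℝ)^2 := by field_simp; ring
  rw [e1, e2]
  have b1 : |(-3 : ℝ) * (n:ℝ)^(n-2) / (n:ℝ)| ≤ 3 * (n:ℝ)^(n-2) := by
    rw [abs_div, abs_mul]
    rw [abs_of_nonneg (by positivity : (0:ℝ) ≤ (n:ℝ)^(n-2)), abs_of_nonneg h0.le]
    rw [div_le_iff₀ h0]
    have h1n : (1:ℝ) ≤ (n:ℝ) := by exact_mod_cast hn
    have h3 : |(-3:ℝ)| = 3 := by norm_num
    rw [h3]
    nlinarith [pow_nonneg h0.le (n-2)]
  have b2 : |((n*n - n : ℕ) : ℝ) * ((n:ℝ)^(n-2) * (3 / (n:ℝ)^2))| ≤ 3 * (n:ℝ)^(n-2) := by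
    rw [abs_mul, abs_mul, Nat.abs_cast, abs_of_nonneg (by positivity : (0:ℝ) ≤ (n:ℝ)^(n-2)),
      abs_of_nonneg (by positivity : (0:ℝ) ≤ 3 / (n:ℝ)^2)]
    have hc2 : ((n*n - n : ℕ) : ℝ) ≤ (n:ℝ)^2 := by
      calc ((n*n - n : ℕ) : ℝ) ≤ ((n*n : ℕ) : ℝ) := by
            exact_mod_cast Nat.cast_le.mpr (Nat.sub_le _ _)
        _ = (n:ℝ)^2 := by push_cast; ring
    calc ((n*n - n : ℕ) : ℝ) * ((n:ℝ)^(n-2) * (3 / (n:ℝ)^2))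
        ≤ (n:ℝ)^2 * ((n:ℝ)^(n-2) * (3 / (n:ℝ)^2)) := by
          apply mul_le_mul_of_nonneg_right hc2 (by positivity)
      _ = 3 * (n:ℝ)^(n-2) := by field_simp
  calc |_ + _| ≤ _ := abs_add_le _ _
    _ ≤ 3 * (n:ℝ)^(n-2) + 3 * (n:ℝ)^(n-2) := add_le_add b1 b2
    _ = 6 * (n:ℝ)^(n-2) := by ring

lemma sum_jk_bound {n h h' : ℕ} (hh : 1 ≤ h) (hhn : h < n) (hh'1 : 1 ≤ h') (hh'n : h' < n) :
    ∑ j ∈ Finset.range (n - h), ∑ k ∈ Finset.range (n - h'), |Tq n j (j+h) k (k+h')|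
      ≤ 62 * ((n:ℝ)^n * n) := by
  have hn : 1 ≤ n := by omega
  have h0 : (0:ℝ) < n := by exact_mod_cast Nat.pos_of_ne_zero (by omega)
  have hpow : (0:ℝ) ≤ (n:ℝ)^n := by positivity
  have inner : ∀ j ∈ Finset.range (n - h),
      ∑ k ∈ Finset.range (n - h'), |Tq n j (j+h) k (k+h')| ≤ 62 * (n:ℝ)^n := by
    intro j hj
    rw [Finset.mem_range] at hj
    have hjn : j < n := by omega
    have hjhn : j + h < n := by omega
    set bad : Finset ℕ := {j, j + h, j - h', j + h - h'} with hbad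
    rw [← Finset.sum_filter_add_sum_filter_not (Finset.range (n - h')) (fun k => k ∈ bad)]
    have hb1 : ∑ k ∈ (Finset.range (n - h')).filter (fun k => k ∈ bad),
        |Tq n j (j+h) k (k+h')| ≤ 56 * (n:ℝ)^n := by
      have hcard : ((Finset.range (n - h')).filter (fun k => k ∈ bad)).card ≤ 4 := by
        calc ((Finset.range (n - h')).filter (fun k => k ∈ bad)).card ≤ bad.card := by
              apply Finset.card_le_card
              intro k hk
              exact (Finset.mem_filter.mp hk).2
          _ ≤ 4 := by
            apply le_trans (Finset.card_insert_le _ _)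
            have := Finset.card_insert_le (j+h) ({j - h', j + h - h'} : Finset ℕ)
            have := Finset.card_insert_le (j-h') ({j + h - h'} : Finset ℕ)
            simp only [Finset.card_singleton] at *
            omega
      calc ∑ k ∈ (Finset.range (n - h')).filter (fun k => k ∈ bad), |Tq n j (j+h) k (k+h')|
          ≤ ((Finset.range (n - h')).filter (fun k => k ∈ bad)).card • (14 * (n:ℝ)^n) := by
            apply Finset.sum_le_card_nsmul
            intro k hk
            have hkr := Finset.mem_range.mp (Finset.mem_filter.mp hk).1
            exact abs_Tq_le hjn hjhn (by omega) (by omega)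
        _ ≤ 4 • (14 * (n:ℝ)^n) := by
            apply nsmul_le_nsmul_left (by positivity) hcard
        _ = 56 * (n:ℝ)^n := by
            rw [nsmul_eq_mul]; ring
    have hb2 : ∑ k ∈ (Finset.range (n - h')).filter (fun k => ¬ (k ∈ bad)),
        |Tq n j (j+h) k (k+h')| ≤ 6 * (n:ℝ)^n := by
      have hterm : ∀ k ∈ (Finset.range (n - h')).filter (fun k => ¬ (k ∈ bad)),
          |Tq n j (j+h) k (k+h')| ≤ 6 * (n:ℝ)^(n-2) := by
        intro k hk
        rw [Finset.mem_filter, Finset.mem_range] at hk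
        obtain ⟨hkr, hknb⟩ := hk
        simp only [hbad, Finset.mem_insert, Finset.mem_singleton] at hknb
        push_neg at hknb
        obtain ⟨ne1, ne2, ne3, ne4⟩ := hknb
        apply abs_Tq_le_distinct hjn hjhn (by omega) (by omega) (by omega) (by omega)
          (by omega) (by omega) (by omega) (by omega)
      calc ∑ k ∈ (Finset.range (n - h')).filter (fun k => ¬ (k ∈ bad)), |Tq n j (j+h) k (k+h')|
          ≤ ((Finset.range (n - h')).filter (fun k => ¬ (k ∈ bad))).card • (6 * (n:ℝ)^(n-2)) :=
            Finset.sum_le_card_nsmul _ _ _ hterm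
        _ ≤ n • (6 * (n:ℝ)^(n-2)) := by
            apply nsmul_le_nsmul_left (by positivity)
            calc ((Finset.range (n - h')).filter (fun k => ¬ (k ∈ bad))).card
                ≤ (Finset.range (n - h')).card := Finset.card_filter_le _ _
              _ = n - h' := Finset.card_range _
              _ ≤ n := Nat.sub_le _ _
        _ ≤ 6 * (n:ℝ)^n := by
            rw [nsmul_eq_mul]
            have e : (n:ℝ) * (n:ℝ)^(n-2) ≤ (n:ℝ)^n := by
              calc (n:ℝ) * (n:ℝ)^(n-2) = (n:ℝ)^(n-2+1) := by rw [pow_succ]; ring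
                _ ≤ (n:ℝ)^n := by
                  apply pow_le_pow_right₀ (by exact_mod_cast hn)
                  omega
            nlinarith [pow_nonneg h0.le (n-2)]
    linarith
  calc ∑ j ∈ Finset.range (n - h), ∑ k ∈ Finset.range (n - h'), |Tq n j (j+h) k (k+h')|
      ≤ (Finset.range (n - h)).card • (62 * (n:ℝ)^n) := Finset.sum_le_card_nsmul _ _ _ inner
    _ ≤ n • (62 * (n:ℝ)^n) := by
        apply nsmul_le_nsmul_left (by positivity)
        calc (Finset.range (n - h)).card = n - h := Finset.card_range _
          _ ≤ n := Nat.sub_le _ _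
    _ = 62 * ((n:ℝ)^n * n) := by rw [nsmul_eq_mul]; ring

lemma Xn_eq {γ : ℕ → ℝ} {n : ℕ} (hn : 1 ≤ n) (f : Fin n → Fin n) :
    Xn γ n f = (1/(n:ℝ)) * ∑ h ∈ Finset.Ico 1 n, γ h * Ucr n h f := by
  have h0 : (n:ℝ) ≠ 0 := by
    have : (0:ℝ) < n := by exact_mod_cast Nat.pos_of_ne_zero (by omega)
    exact this.ne'
  unfold Xn Ucr
  rw [Finset.mul_sum, Finset.mul_sum]
  apply Finset.sum_congr rfl
  intro h _
  have e : ∀ j, ((mw n j f : ℝ) / n - 1 / n) * ((mw n (j + h) f : ℝ) / n - 1 / n)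
      = (1/(n:ℝ)^2) * (Yc n j f * Yc n (j + h) f) := by
    intro j
    unfold Yc
    rw [← sub_div, ← sub_div, div_mul_div_comm, one_div_mul_eq_div, sq]
  rw [Finset.sum_congr rfl (fun j _ => e j), ← Finset.mul_sum]
  field_simp

lemma sum_U_mul_U {n h h' : ℕ} :
    ∑ f : Fin n → Fin n, Ucr n h f * Ucr n h' f
      = ∑ j ∈ Finset.range (n - h), ∑ k ∈ Finset.range (n - h'), Tq n j (j+h) k (k+h') := by
  have e : ∀ f : Fin n → Fin n, Ucr n h f * Ucr n h' f
      = ∑ j ∈ Finset.range (n - h), ∑ k ∈ Finset.range (n - h'),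
          Yc n j f * Yc n (j+h) f * (Yc n k f * Yc n (k+h') f) := by
    intro f
    unfold Ucr
    rw [Finset.sum_mul_sum]
  rw [Finset.sum_congr rfl (fun f _ => e f)]
  rw [Finset.sum_comm]
  apply Finset.sum_congr rfl
  intro j _
  rw [Finset.sum_comm]
  rfl

lemma second_moment {γ : ℕ → ℝ} {n : ℕ} (hn : 1 ≤ n) {G : ℝ} (hG0 : 0 ≤ G)
    (hG : ∑ h ∈ Finset.Ico 1 n, |γ h| ≤ G) :
    ∑ f : Fin n → Fin n, (Xn γ n f)^2 ≤ 62 * G^2 * (n:ℝ)^n / n := by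
  have h0 : (0:ℝ) < n := by exact_mod_cast Nat.pos_of_ne_zero (by omega)
  have e1 : ∀ f : Fin n → Fin n, (Xn γ n f)^2
      = (1/(n:ℝ)^2) * ∑ h ∈ Finset.Ico 1 n, ∑ h' ∈ Finset.Ico 1 n,
          γ h * γ h' * (Ucr n h f * Ucr n h' f) := by
    intro f
    rw [Xn_eq hn f, mul_pow, sq ((∑ h ∈ Finset.Ico 1 n, γ h * Ucr n h f)), Finset.sum_mul_sum]
    have : ∀ h ∈ Finset.Ico 1 n, ∀ h' ∈ Finset.Ico 1 n,
        (γ h * Ucr n h f) * (γ h' * Ucr n h' f) = γ h * γ h' * (Ucr n h f * Ucr n h' f) := by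
      intros; ring
    rw [Finset.sum_congr rfl (fun h hh => Finset.sum_congr rfl (fun h' hh' => this h hh h' hh'))]
    ring
  rw [Finset.sum_congr rfl (fun f _ => e1 f), ← Finset.mul_sum]
  rw [Finset.sum_comm]
  have e2 : ∀ h ∈ Finset.Ico 1 n, ∑ f : Fin n → Fin n, ∑ h' ∈ Finset.Ico 1 n,
      γ h * γ h' * (Ucr n h f * Ucr n h' f)
      = ∑ h' ∈ Finset.Ico 1 n, γ h * γ h' *
          (∑ j ∈ Finset.range (n - h), ∑ k ∈ Finset.range (n - h'), Tq n j (j+h) k (k+h')) := by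
    intro h _
    rw [Finset.sum_comm]
    apply Finset.sum_congr rfl
    intro h' _
    rw [← sum_U_mul_U, Finset.mul_sum]
  rw [Finset.sum_congr rfl e2]
  have bound : ∑ h ∈ Finset.Ico 1 n, ∑ h' ∈ Finset.Ico 1 n, γ h * γ h' *
      (∑ j ∈ Finset.range (n - h), ∑ k ∈ Finset.range (n - h'), Tq n j (j+h) k (k+h'))
      ≤ G^2 * (62 * ((n:ℝ)^n * n)) := by
    calc ∑ h ∈ Finset.Ico 1 n, ∑ h' ∈ Finset.Ico 1 n, γ h * γ h' *
        (∑ j ∈ Finset.range (n - h), ∑ k ∈ Finset.range (n - h'), Tq n j (j+h) k (k+h'))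
        ≤ ∑ h ∈ Finset.Ico 1 n, ∑ h' ∈ Finset.Ico 1 n, |γ h| * |γ h'| * (62 * ((n:ℝ)^n * n)) := by
          apply Finset.sum_le_sum
          intro h hh
          apply Finset.sum_le_sum
          intro h' hh'
          rw [Finset.mem_Ico] at hh hh'
          have habs : |∑ j ∈ Finset.range (n - h), ∑ k ∈ Finset.range (n - h'),
              Tq n j (j+h) k (k+h')| ≤ 62 * ((n:ℝ)^n * n) := by
            calc |∑ j ∈ Finset.range (n - h), ∑ k ∈ Finset.range (n - h'), Tq n j (j+h) k (k+h')|
                ≤ ∑ j ∈ Finset.range (n - h), |∑ k ∈ Finset.range (n - h'), Tq n j (j+h) k (k+h')| :=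
                  Finset.abs_sum_le_sum_abs _ _
              _ ≤ ∑ j ∈ Finset.range (n - h), ∑ k ∈ Finset.range (n - h'), |Tq n j (j+h) k (k+h')| := by
                  apply Finset.sum_le_sum
                  intro j _
                  exact Finset.abs_sum_le_sum_abs _ _
              _ ≤ 62 * ((n:ℝ)^n * n) := sum_jk_bound hh.1 hh.2 hh'.1 hh'.2
          calc γ h * γ h' * (∑ j ∈ Finset.range (n - h), ∑ k ∈ Finset.range (n - h'),
                Tq n j (j+h) k (k+h'))
              ≤ |γ h * γ h' * (∑ j ∈ Finset.range (n - h), ∑ k ∈ Finset.range (n - h'),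
                Tq n j (j+h) k (k+h'))| := le_abs_self _
            _ = |γ h| * |γ h'| * |∑ j ∈ Finset.range (n - h), ∑ k ∈ Finset.range (n - h'),
                Tq n j (j+h) k (k+h')| := by rw [abs_mul, abs_mul]
            _ ≤ |γ h| * |γ h'| * (62 * ((n:ℝ)^n * n)) := by
                apply mul_le_mul_of_nonneg_left habs (by positivity)
      _ = (∑ h ∈ Finset.Ico 1 n, |γ h|) * (∑ h' ∈ Finset.Ico 1 n, |γ h'|) * (62 * ((n:ℝ)^n * n)) := by
          rw [Finset.sum_mul_sum]
          rw [Finset.sum_mul]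
          apply Finset.sum_congr rfl
          intro h _
          rw [Finset.sum_mul]
      _ ≤ G * G * (62 * ((n:ℝ)^n * n)) := by
          have hs : 0 ≤ ∑ h ∈ Finset.Ico 1 n, |γ h| :=
            Finset.sum_nonneg (fun h _ => abs_nonneg _)
          apply mul_le_mul_of_nonneg_right _ (by positivity)
          apply mul_le_mul hG hG hs hG0
      _ = G^2 * (62 * ((n:ℝ)^n * n)) := by ring
  calc (1/(n:ℝ)^2) * ∑ h ∈ Finset.Ico 1 n, ∑ h' ∈ Finset.Ico 1 n, γ h * γ h' *
      (∑ j ∈ Finset.range (n - h), ∑ k ∈ Finset.range (n - h'), Tq n j (j+h) k (k+h'))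
      ≤ (1/(n:ℝ)^2) * (G^2 * (62 * ((n:ℝ)^n * n))) := by
        apply mul_le_mul_of_nonneg_left bound (by positivity)
    _ = 62 * G^2 * (n:ℝ)^n / n := by field_simp

/-- for a summable sequence `γ`, the randomized cross term
`n Σ_{h=1}^{n−1} γ_h Σ_{j=1}^{n−h} (w_j/n − 1/n)(w_{j+h}/n − 1/n) → 0` in probability. -/
theorem stmt9 (γ : ℕ → ℝ) (hγ : Summable fun h => |γ h|) :
    ∀ ε > (0 : ℝ), Tendsto (fun n : ℕ =>
        multinomialMeasure n
          {f | ε ≤ |(n : ℝ) * ∑ h ∈ Finset.Ico 1 n, γ h *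
                  ∑ j ∈ Finset.range (n - h),
                    ((mw n j f : ℝ) / n - 1 / n) * ((mw n (j + h) f : ℝ) / n - 1 / n)|})
      atTop (nhds 0) := by
  intro ε hε
  set G : ℝ := ∑' h, |γ h| with hGdef
  have hG0 : 0 ≤ G := tsum_nonneg (fun _ => abs_nonneg _)
  have hGn : ∀ n : ℕ, ∑ h ∈ Finset.Ico 1 n, |γ h| ≤ G :=
    fun n => Summable.sum_le_tsum _ (fun _ _ => abs_nonneg _) hγ
  set C : ℝ := 62 * G^2 / ε^2 with hCdef
  have hC0 : 0 ≤ C := by positivity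
  have main : ∀ n : ℕ, 1 ≤ n →
      multinomialMeasure n
        {f | ε ≤ |(n : ℝ) * ∑ h ∈ Finset.Ico 1 n, γ h *
            ∑ j ∈ Finset.range (n - h),
              ((mw n j f : ℝ) / n - 1 / n) * ((mw n (j + h) f : ℝ) / n - 1 / n)|}
        ≤ ENNReal.ofReal (C / n) := by
    intro n hn
    have hn0 : (0:ℝ) < n := by exact_mod_cast Nat.pos_of_ne_zero (by omega)
    set A : Set (Fin n → Fin n) := {f | ε ≤ |Xn γ n f|} with hAdef
    show multinomialMeasure n A ≤ ENNReal.ofReal (C / n)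
    have hfin : A.Finite := Set.toFinite A
    have hcount : Measure.count A = (hfin.toFinset.card : ENNReal) :=
      Measure.count_apply_finite A hfin
    set m : ℕ := hfin.toFinset.card with hmdef
    have hkey : ε^2 * m ≤ 62 * G^2 * (n:ℝ)^n / n := by
      have h1 : ∀ f ∈ hfin.toFinset, ε^2 ≤ (Xn γ n f)^2 := by
        intro f hf
        have hf' : ε ≤ |Xn γ n f| := by
          have := (Set.Finite.mem_toFinset hfin).mp hf
          exact this
        calc ε^2 ≤ |Xn γ n f|^2 := pow_le_pow_left₀ hε.le hf' 2
          _ = (Xn γ n f)^2 := sq_abs _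
      have h2 : m • (ε^2) ≤ ∑ f ∈ hfin.toFinset, (Xn γ n f)^2 :=
        Finset.card_nsmul_le_sum _ _ _ h1
      have h3 : ∑ f ∈ hfin.toFinset, (Xn γ n f)^2 ≤ ∑ f : Fin n → Fin n, (Xn γ n f)^2 := by
        apply Finset.sum_le_sum_of_subset_of_nonneg (Finset.subset_univ _)
        intro f _ _
        positivity
      have h4 := second_moment hn hG0 (hGn n)
      have h2' : (m:ℝ) * ε^2 ≤ ∑ f ∈ hfin.toFinset, (Xn γ n f)^2 := by
        rw [← nsmul_eq_mul]
        exact h2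
      calc ε^2 * m = (m:ℝ) * ε^2 := by ring
        _ ≤ _ := le_trans h2' (le_trans h3 h4)
    have hcardfun : (Fintype.card (Fin n → Fin n)) = n^n := by
      rw [Fintype.card_fun, Fintype.card_fin]
    have hμ : multinomialMeasure n A = ((n^n : ℕ) : ENNReal)⁻¹ * (m : ENNReal) := by
      rw [multinomialMeasure, Measure.smul_apply, smul_eq_mul, hcount, hcardfun]
    have hP : (0:ℝ) < (n:ℝ)^n := by positivity
    have e : ENNReal.ofReal ((m:ℝ)/((n:ℝ)^n)) = ((n^n : ℕ) : ENNReal)⁻¹ * (m : ENNReal) := by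
      rw [ENNReal.ofReal_div_of_pos hP, ENNReal.div_eq_inv_mul]
      congr 1
      · rw [show ((n:ℝ)^n) = ((n^n : ℕ):ℝ) by push_cast; ring, ENNReal.ofReal_natCast]
      · rw [ENNReal.ofReal_natCast]
    rw [hμ, ← e]
    apply ENNReal.ofReal_le_ofReal
    rw [div_le_div_iff₀ hP hn0, hCdef, div_mul_eq_mul_div, le_div_iff₀ (by positivity : (0:ℝ) < ε^2)]
    have h5 : (n:ℝ) * (ε^2 * m) ≤ (n:ℝ) * (62*G^2*(n:ℝ)^n/n) :=
      mul_le_mul_of_nonneg_left hkey hn0.le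
    have h6 : (n:ℝ) * (62*G^2*(n:ℝ)^n/n) = 62*G^2*(n:ℝ)^n := by field_simp
    calc (m:ℝ) * (n:ℝ) * ε^2 = (n:ℝ) * (ε^2 * m) := by ring
      _ ≤ 62*G^2*(n:ℝ)^n := h6 ▸ h5
  refine tendsto_of_tendsto_of_tendsto_of_le_of_le'
    (tendsto_const_nhds : Tendsto (fun _ : ℕ => (0 : ENNReal)) atTop (nhds 0))
    ?_ (Eventually.of_forall (fun n => zero_le))
    (Filter.eventually_atTop.mpr ⟨1, fun n hn => main n hn⟩)
  have h1 : Tendsto (fun n : ℕ => C / (n:ℝ)) atTop (nhds 0) :=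
    tendsto_const_div_atTop_nhds_zero_nat C
  have h2 := ENNReal.tendsto_ofReal h1
  simpa using h2
end
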